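/- arXiv:2401.08877 — 8 statements merged into one kernel-verified Lean document; each statement's English description precedes it below -/
import Mathlib

section
/- Let φ : ℝ → ℂ be a Schwartz function and let c > 0. Then the function t ↦ M(φ)(c+it) = ∫₀^∞ φ(x) x^{c+it−1} dx belongs to the Schwartz space 𝓢(ℝ,ℂ); i.e. it is smooth and for all α, β ∈ ℕ, sup_{t∈ℝ} |t^α · (d/dt)^β M(φ)(c+it)| < ∞. -/
open MeasureTheory Complex Set

open scoped FourierTransform Real ContDiff

namespace MellinSchwartzAux

/-- The building blocks: `u ↦ exp(-(c+m)u) * φ^{(j)}(exp(-u))`. -/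
noncomputable def F (φ : SchwartzMap ℝ ℂ) (c : ℝ) (m j : ℕ) : ℝ → ℂ :=
  fun u => (Real.exp (-(c + m) * u) : ℂ) * iteratedDeriv j (⇑φ) (Real.exp (-u))

lemma pow_le_factorial_mul_exp (k : ℕ) {x : ℝ} (hx : 0 ≤ x) :
    x ^ k ≤ (k.factorial : ℝ) * Real.exp x := by
  have h1 : x ^ k / (k.factorial : ℝ) ≤ Real.exp x := by
    refine le_trans ?_ (Real.sum_le_exp_of_nonneg hx (k + 1))
    exact Finset.single_le_sum (f := fun i => x ^ i / (i.factorial : ℝ))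
      (fun i _ => by positivity) (Finset.self_mem_range_succ k)
  have hk : (0 : ℝ) < (k.factorial : ℝ) := by positivity
  calc x ^ k = x ^ k / (k.factorial : ℝ) * (k.factorial : ℝ) := by field_simp
    _ ≤ Real.exp x * (k.factorial : ℝ) := by gcongr
    _ = (k.factorial : ℝ) * Real.exp x := by ring

lemma pow_mul_exp_le (k : ℕ) {b : ℝ} (hb : 0 < b) (u : ℝ) :
    |u| ^ k * Real.exp (-b * |u|) ≤ (k.factorial : ℝ) * (2 / b) ^ k := by
  have h0 : (0:ℝ) ≤ |u| := abs_nonneg u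
  have h1 : |u| ^ k = (2 / b) ^ k * (b * |u| / 2) ^ k := by
    rw [← mul_pow]; congr 1; field_simp
  have h2 : (b * |u| / 2) ^ k ≤ (k.factorial : ℝ) * Real.exp (b * |u| / 2) :=
    pow_le_factorial_mul_exp k (by positivity)
  have h3 : Real.exp (b * |u| / 2) * Real.exp (-b * |u|) = Real.exp (-(b * |u| / 2)) := by
    rw [← Real.exp_add]; ring_nf
  have h4 : Real.exp (-(b * |u| / 2)) ≤ 1 := by
    rw [Real.exp_le_one_iff]
    nlinarith [abs_nonneg u]
  calc |u| ^ k * Real.exp (-b * |u|)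
      = (2 / b) ^ k * ((b * |u| / 2) ^ k * Real.exp (-b * |u|)) := by rw [h1]; ring
    _ ≤ (2 / b) ^ k * ((k.factorial : ℝ) * Real.exp (b * |u| / 2) * Real.exp (-b * |u|)) :=
        mul_le_mul_of_nonneg_left
          (mul_le_mul_of_nonneg_right h2 (Real.exp_pos _).le) (by positivity)
    _ = (2 / b) ^ k * ((k.factorial : ℝ) * Real.exp (-(b * |u| / 2))) := by rw [mul_assoc, h3]
    _ ≤ (2 / b) ^ k * ((k.factorial : ℝ) * 1) :=
        mul_le_mul_of_nonneg_left (mul_le_mul_of_nonneg_left h4 (by positivity)) (by positivity)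
    _ = (k.factorial : ℝ) * (2 / b) ^ k := by ring

lemma F_exp_bound (φ : SchwartzMap ℝ ℂ) {c : ℝ} (hc : 0 < c) (m j : ℕ) :
    ∃ D : ℝ, 0 ≤ D ∧ ∀ u : ℝ,
      ‖F φ c m j u‖ ≤ D * Real.exp (-(min c 1) * |u|) := by
  set N : ℕ := ⌈c⌉₊ + m + 1 with hN
  set D : ℝ := max (SchwartzMap.seminorm ℝ 0 j φ) (SchwartzMap.seminorm ℝ N j φ) with hD
  have hD0 : 0 ≤ D := le_trans (apply_nonneg _ _) (le_max_left _ _)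
  refine ⟨D, hD0, fun u => ?_⟩
  have hb1 : min c 1 ≤ 1 := min_le_right _ _
  have hbc : min c 1 ≤ c := min_le_left _ _
  have hnorm : ‖F φ c m j u‖
      = Real.exp (-(c + m) * u) * ‖iteratedDeriv j (⇑φ) (Real.exp (-u))‖ := by
    rw [F, norm_mul, Complex.norm_real, Real.norm_eq_abs, abs_of_pos (Real.exp_pos _)]
  rcases le_or_gt 0 u with hu | hu
  · have h1 : ‖iteratedDeriv j (⇑φ) (Real.exp (-u))‖ ≤ D := by
      have h := SchwartzMap.le_seminorm' ℝ 0 j φ (Real.exp (-u))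
      rw [pow_zero, one_mul] at h
      exact h.trans (le_max_left _ _)
    have h2 : Real.exp (-(c + m) * u) ≤ Real.exp (-(min c 1) * |u|) := by
      rw [_root_.abs_of_nonneg hu]
      apply Real.exp_le_exp.mpr
      nlinarith [Nat.cast_nonneg (α := ℝ) m]
    rw [hnorm]
    calc Real.exp (-(c + m) * u) * ‖iteratedDeriv j (⇑φ) (Real.exp (-u))‖
        ≤ Real.exp (-(min c 1) * |u|) * D :=
          mul_le_mul h2 h1 (norm_nonneg _) (Real.exp_pos _).le
      _ = D * Real.exp (-(min c 1) * |u|) := mul_comm _ _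
  · have hNc : (c + m) + 1 ≤ (N : ℝ) := by
      have := Nat.le_ceil c
      push_cast [hN]
      linarith
    have h1 : ‖iteratedDeriv j (⇑φ) (Real.exp (-u))‖ ≤ D * Real.exp ((N : ℝ) * u) := by
      have hle := SchwartzMap.le_seminorm' ℝ N j φ (Real.exp (-u))
      rw [abs_of_pos (Real.exp_pos _), ← Real.exp_nat_mul] at hle
      have hpos : 0 < Real.exp ((N : ℝ) * (-u)) := Real.exp_pos _
      have hstep : ‖iteratedDeriv j (⇑φ) (Real.exp (-u))‖
          ≤ SchwartzMap.seminorm ℝ N j φ / Real.exp ((N : ℝ) * (-u)) :=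
        (le_div_iff₀ hpos).mpr (by linarith [hle])
      calc ‖iteratedDeriv j (⇑φ) (Real.exp (-u))‖
          ≤ SchwartzMap.seminorm ℝ N j φ / Real.exp ((N : ℝ) * (-u)) := hstep
        _ = SchwartzMap.seminorm ℝ N j φ * Real.exp ((N : ℝ) * u) := by
            rw [div_eq_mul_inv, ← Real.exp_neg]; ring_nf
        _ ≤ D * Real.exp ((N : ℝ) * u) := by
            gcongr; exact le_max_right _ _
    rw [hnorm]
    have h2 : Real.exp (-(c + m) * u) * Real.exp ((N : ℝ) * u)
        ≤ Real.exp (-(min c 1) * |u|) := by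
      rw [← Real.exp_add, _root_.abs_of_neg hu]
      apply Real.exp_le_exp.mpr
      have hm0 : (0:ℝ) ≤ (m:ℝ) := Nat.cast_nonneg m
      nlinarith
    calc Real.exp (-(c + m) * u) * ‖iteratedDeriv j (⇑φ) (Real.exp (-u))‖
        ≤ Real.exp (-(c + m) * u) * (D * Real.exp ((N : ℝ) * u)) :=
          mul_le_mul_of_nonneg_left h1 (Real.exp_pos _).le
      _ = D * (Real.exp (-(c + m) * u) * Real.exp ((N : ℝ) * u)) := by ring
      _ ≤ D * Real.exp (-(min c 1) * |u|) := mul_le_mul_of_nonneg_left h2 hD0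

lemma F_bound (φ : SchwartzMap ℝ ℂ) {c : ℝ} (hc : 0 < c) (m j k : ℕ) :
    ∃ C : ℝ, ∀ u : ℝ, |u| ^ k * ‖F φ c m j u‖ ≤ C := by
  obtain ⟨D, hD0, hD⟩ := F_exp_bound φ hc m j
  have hb : (0:ℝ) < min c 1 := lt_min hc one_pos
  refine ⟨D * ((k.factorial : ℝ) * (2 / min c 1) ^ k), fun u => ?_⟩
  calc |u| ^ k * ‖F φ c m j u‖
      ≤ |u| ^ k * (D * Real.exp (-(min c 1) * |u|)) :=
        mul_le_mul_of_nonneg_left (hD u) (by positivity)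
    _ = D * (|u| ^ k * Real.exp (-(min c 1) * |u|)) := by ring
    _ ≤ D * ((k.factorial : ℝ) * (2 / min c 1) ^ k) :=
        mul_le_mul_of_nonneg_left (pow_mul_exp_le k hb u) hD0

lemma φ_iteratedDeriv_differentiable (φ : SchwartzMap ℝ ℂ) (j : ℕ) :
    Differentiable ℝ (iteratedDeriv j (⇑φ)) :=
  (φ.smooth ((j : ℕ∞) + 1)).differentiable_iteratedDeriv j
    (by exact_mod_cast Nat.lt_succ_self j)

lemma F_hasDerivAt (φ : SchwartzMap ℝ ℂ) (c : ℝ) (m j : ℕ) (u : ℝ) :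
    HasDerivAt (F φ c m j)
      ((-((c:ℂ) + m)) * F φ c m j u - F φ c (m + 1) (j + 1) u) u := by
  have hlin : HasDerivAt (fun u : ℝ => -(c + m) * u) (-(c + (m:ℝ))) u := by
    simpa using (hasDerivAt_id u).const_mul (-(c + (m:ℝ)))
  have hexp : HasDerivAt (fun u : ℝ => Real.exp (-(c + m) * u))
      (Real.exp (-(c + m) * u) * (-(c + (m:ℝ)))) u :=
    (Real.hasDerivAt_exp _).comp u hlin
  have hexpC : HasDerivAt (fun u : ℝ => ((Real.exp (-(c + m) * u) : ℝ) : ℂ))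
      ((Real.exp (-(c + m) * u) * (-(c + (m:ℝ))) : ℝ) : ℂ) u := hexp.ofReal_comp
  have hinner : HasDerivAt (fun u : ℝ => Real.exp (-u)) (-Real.exp (-u)) u := by
    exact ((Real.hasDerivAt_exp (-u)).comp u (hasDerivAt_neg u)).congr_deriv (by simp)
  have houter : HasDerivAt (iteratedDeriv j (⇑φ))
      (iteratedDeriv (j + 1) (⇑φ) (Real.exp (-u))) (Real.exp (-u)) := by
    rw [iteratedDeriv_succ]
    exact ((φ_iteratedDeriv_differentiable φ j) (Real.exp (-u))).hasDerivAt
  have hcomp : HasDerivAt (fun u : ℝ => iteratedDeriv j (⇑φ) (Real.exp (-u)))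
      ((-Real.exp (-u)) • iteratedDeriv (j + 1) (⇑φ) (Real.exp (-u))) u :=
    by have := houter.scomp u hinner; exact this
  have h := hexpC.mul hcomp
  refine h.congr_deriv (Eq.symm ?_)
  simp only [F]
  have hsplit : Real.exp (-(c + ((m:ℝ) + 1)) * u) = Real.exp (-(c + m) * u) * Real.exp (-u) := by
    rw [← Real.exp_add]; ring_nf
  push_cast [hsplit, real_smul]
  ring

lemma F_contDiff (φ : SchwartzMap ℝ ℂ) (c : ℝ) :
    ContDiff ℝ ∞ (F φ c 0 0) := by
  have h1 : ContDiff ℝ ∞ (fun u : ℝ => ((Real.exp (-(c + (0:ℕ)) * u) : ℝ) : ℂ)) :=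
    Complex.ofRealCLM.contDiff.comp (Real.contDiff_exp.comp (contDiff_const.mul contDiff_id))
  have h2 : ContDiff ℝ ∞ (fun u : ℝ => iteratedDeriv 0 (⇑φ) (Real.exp (-u))) := by
    simp only [iteratedDeriv_zero]
    exact (φ.smooth ⊤).comp (Real.contDiff_exp.comp contDiff_neg)
  exact h1.mul h2

lemma repr (φ : SchwartzMap ℝ ℂ) (c : ℝ) (n : ℕ) :
    ∃ a : ℕ → ℂ, iteratedDeriv n (F φ c 0 0)
      = fun u => ∑ m ∈ Finset.range (n + 1), a m * F φ c m m u := by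
  induction n with
  | zero =>
    refine ⟨fun m => if m = 0 then 1 else 0, ?_⟩
    funext u
    simp
  | succ n ih =>
    obtain ⟨a, ha⟩ := ih
    refine ⟨fun m => (if m < n + 1 then a m * (-((c:ℂ) + m)) else 0)
      + (if m = 0 then 0 else -(a (m - 1))), ?_⟩
    funext u
    have hder : HasDerivAt (iteratedDeriv n (F φ c 0 0))
        (∑ m ∈ Finset.range (n + 1),
          a m * ((-((c:ℂ) + m)) * F φ c m m u - F φ c (m + 1) (m + 1) u)) u := by
      rw [ha]
      exact HasDerivAt.fun_sum fun m _ =>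
        HasDerivAt.const_mul (a m) (F_hasDerivAt φ c m m u)
    rw [iteratedDeriv_succ, hder.deriv]
    have lhs_eq : ∑ m ∈ Finset.range (n + 1),
        a m * ((-((c:ℂ) + m)) * F φ c m m u - F φ c (m + 1) (m + 1) u)
        = (∑ m ∈ Finset.range (n + 1), (a m * (-((c:ℂ) + m))) * F φ c m m u)
          + ∑ m ∈ Finset.range (n + 1), (-(a m)) * F φ c (m + 1) (m + 1) u := by
      rw [← Finset.sum_add_distrib]
      exact Finset.sum_congr rfl fun m _ => by ring
    have rhs_eq : ∑ m ∈ Finset.range (n + 1 + 1),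
        ((if m < n + 1 then a m * (-((c:ℂ) + m)) else 0)
          + (if m = 0 then 0 else -(a (m - 1)))) * F φ c m m u
        = (∑ m ∈ Finset.range (n + 1 + 1),
            (if m < n + 1 then a m * (-((c:ℂ) + m)) else 0) * F φ c m m u)
          + ∑ m ∈ Finset.range (n + 1 + 1),
            (if m = 0 then 0 else -(a (m - 1))) * F φ c m m u := by
      rw [← Finset.sum_add_distrib]
      exact Finset.sum_congr rfl fun m _ => by ring
    have h1 : ∑ m ∈ Finset.range (n + 1 + 1),
        (if m < n + 1 then a m * (-((c:ℂ) + m)) else 0) * F φ c m m u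
        = ∑ m ∈ Finset.range (n + 1), (a m * (-((c:ℂ) + m))) * F φ c m m u := by
      rw [Finset.sum_range_succ, if_neg (lt_irrefl (n + 1)), zero_mul, add_zero]
      exact Finset.sum_congr rfl fun m hm => by rw [if_pos (Finset.mem_range.mp hm)]
    have h2 : ∑ m ∈ Finset.range (n + 1 + 1),
        (if m = 0 then 0 else -(a (m - 1))) * F φ c m m u
        = ∑ m ∈ Finset.range (n + 1), (-(a m)) * F φ c (m + 1) (m + 1) u := by
      rw [Finset.sum_range_succ']
      simp
    rw [lhs_eq, rhs_eq, h1, h2]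

/-- The function `u ↦ exp(-cu) φ(exp(-u))` as a Schwartz function. -/
noncomputable def gS (φ : SchwartzMap ℝ ℂ) (c : ℝ) (hc : 0 < c) : SchwartzMap ℝ ℂ where
  toFun := F φ c 0 0
  smooth' := F_contDiff φ c
  decay' := by
    intro k n
    obtain ⟨a, ha⟩ := repr φ c n
    choose C hC using fun m => F_bound φ hc m m k
    refine ⟨∑ m ∈ Finset.range (n + 1), ‖a m‖ * C m, fun u => ?_⟩
    rw [Real.norm_eq_abs, norm_iteratedFDeriv_eq_norm_iteratedDeriv, ha]
    calc |u| ^ k * ‖∑ m ∈ Finset.range (n + 1), a m * F φ c m m u‖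
        ≤ |u| ^ k * ∑ m ∈ Finset.range (n + 1), ‖a m * F φ c m m u‖ := by
          have := norm_sum_le (Finset.range (n + 1)) (fun m => a m * F φ c m m u)
          exact mul_le_mul_of_nonneg_left this (by positivity)
      _ = ∑ m ∈ Finset.range (n + 1), ‖a m‖ * (|u| ^ k * ‖F φ c m m u‖) := by
          rw [Finset.mul_sum]
          exact Finset.sum_congr rfl fun m _ => by rw [norm_mul]; ring
      _ ≤ ∑ m ∈ Finset.range (n + 1), ‖a m‖ * C m :=
          Finset.sum_le_sum fun m _ =>
            mul_le_mul_of_nonneg_left (hC m u) (norm_nonneg _)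


end MellinSchwartzAux

open MellinSchwartzAux

/-- for a Schwartz function `φ` and `c > 0`, the function
`t ↦ M(φ)(c+it) = ∫₀^∞ φ(x) x^{c+it−1} dx` belongs to the Schwartz space
`𝓢(ℝ,ℂ)`. -/
theorem mellin_schwartz_vertical_line_schwartz (φ : SchwartzMap ℝ ℂ) (c : ℝ)
    (hc : 0 < c) :
    ∃ ψ : SchwartzMap ℝ ℂ, ∀ t : ℝ,
      ψ t = ∫ x in Ioi (0 : ℝ), φ x * (x : ℂ) ^ ((c : ℂ) + (t : ℂ) * Complex.I - 1) := by
  set e : ℝ ≃L[ℝ] ℝ :=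
    ContinuousLinearEquiv.unitsEquivAut ℝ (Units.mk0 ((2 * π)⁻¹) (by positivity)) with he
  refine ⟨SchwartzMap.compCLMOfContinuousLinearEquiv ℂ e
    (SchwartzMap.fourierTransformCLM ℂ (gS φ c hc)), fun t => ?_⟩
  have h0 : (∫ x in Ioi (0 : ℝ), φ x * (x : ℂ) ^ ((c : ℂ) + (t : ℂ) * Complex.I - 1))
      = mellin (⇑φ) ((c : ℂ) + (t : ℂ) * Complex.I) := by
    rw [mellin]
    exact setIntegral_congr_fun measurableSet_Ioi fun x _ => by rw [smul_eq_mul, mul_comm]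
  have h1 := mellin_eq_fourier (⇑φ) (s := (c : ℂ) + (t : ℂ) * Complex.I)
  have hre : ((c : ℂ) + (t : ℂ) * Complex.I).re = c := by simp
  have him : ((c : ℂ) + (t : ℂ) * Complex.I).im = t := by simp
  rw [hre, him] at h1
  have hfun : (fun u : ℝ => Real.exp (-c * u) • φ (Real.exp (-u))) = ⇑(gS φ c hc) := by
    funext u
    show _ = F φ c 0 0 u
    simp [F, real_smul]
  rw [h0, h1, hfun]
  have happ : (SchwartzMap.compCLMOfContinuousLinearEquiv ℂ e
      (SchwartzMap.fourierTransformCLM ℂ (gS φ c hc))) t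
      = 𝓕 (⇑(gS φ c hc)) (e t) := by
    rw [SchwartzMap.compCLMOfContinuousLinearEquiv_apply]
    simp [SchwartzMap.fourier_coe]
  rw [happ]
  have het : e t = t / (2 * π) := by
    rw [he, ContinuousLinearEquiv.unitsEquivAut_apply]
    simp [div_eq_mul_inv]
  rw [het]
end

section
/- Let φ : ℝ → ℂ be a Schwartz function, let c be a negative real number that is not an integer, let N ∈ ℕ satisfy N + c > 0, and let α ∈ ℕ. With a_n = φ^{(n)}(0)/n! and G_N(s) = ∫₀¹ (φ(x) − Σ_{n=0}^{N−1} a_n x^n) x^{s−1} dx + Σ_{n=0}^{N−1} a_n/(s+n) + ∫₁^∞ φ(x) x^{s−1} dx, one has sup_{t∈ℝ} |t^α · G_N(c+it)| < ∞. -/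
open MeasureTheory Complex Set Finset

open Filter Topology

set_option linter.dupNamespace false

namespace MellinDecayAux

noncomputable def coeffA (φ : SchwartzMap ℝ ℂ) (n : ℕ) : ℂ :=
  iteratedDeriv n (⇑φ) 0 / (n.factorial : ℂ)

noncomputable def Gg (φ : SchwartzMap ℝ ℂ) (N : ℕ) (s : ℂ) : ℂ :=
  (∫ x in Ioc (0 : ℝ) 1,
      (φ x - ∑ n ∈ range N, coeffA φ n * (x : ℂ) ^ n) * (x : ℂ) ^ (s - 1)) +
    (∑ n ∈ range N, coeffA φ n / (s + (n : ℂ))) +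
    ∫ x in Ioi (1 : ℝ), φ x * (x : ℂ) ^ (s - 1)

lemma norm_cpow_real {x : ℝ} (hx : 0 < x) (w : ℂ) : ‖(x : ℂ) ^ w‖ = x ^ w.re := by
  rw [Complex.norm_cpow_eq_rpow_re_of_pos hx]

lemma continuousAt_real_cpow {x : ℝ} (hx : 0 < x) (w : ℂ) :
    ContinuousAt (fun y : ℝ => (y : ℂ) ^ w) x := by
  have : ContinuousAt (fun z : ℂ => z ^ w) (x : ℂ) :=
    continuousAt_cpow_const (by exact Or.inl (by simpa using hx))
  exact this.comp Complex.continuous_ofReal.continuousAt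

lemma aesm_mul_cpow {θ : ℝ → ℂ} (hθ : Continuous θ) (w : ℂ) {S : Set ℝ}
    (hS : MeasurableSet S) (hSpos : S ⊆ Ioi 0) :
    AEStronglyMeasurable (fun x : ℝ => θ x * (x : ℂ) ^ w) (volume.restrict S) := by
  apply ContinuousOn.aestronglyMeasurable ?_ hS
  exact hθ.continuousOn.mul fun x hx =>
    (continuousAt_real_cpow (hSpos hx) w).continuousWithinAt

lemma integrableOn_Ioc_of_bound {h : ℝ → ℂ} {C e : ℝ}
    (hm : AEStronglyMeasurable h (volume.restrict (Ioc (0:ℝ) 1))) (he : -1 < e)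
    (hb : ∀ x ∈ Ioc (0:ℝ) 1, ‖h x‖ ≤ C * x ^ e) :
    IntegrableOn h (Ioc (0:ℝ) 1) := by
  apply Integrable.mono' (g := fun x => C * x ^ e)
  · exact ((intervalIntegrable_iff_integrableOn_Ioc_of_le zero_le_one).mp
      (intervalIntegral.intervalIntegrable_rpow' he)).const_mul C
  · exact hm
  · rw [ae_restrict_iff' measurableSet_Ioc]
    exact ae_of_all _ hb

lemma schwartz_bound_ge_one (θ : SchwartzMap ℝ ℂ) (m : ℕ) :
    ∃ C : ℝ, 0 ≤ C ∧ ∀ x : ℝ, 1 ≤ x → ‖θ x‖ ≤ C * x ^ (-(m:ℝ)) := by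
  obtain ⟨C, hC0, hC⟩ := θ.decay m 0
  refine ⟨C, hC0.le, fun x hx => ?_⟩
  have hx0 : (0:ℝ) < x := lt_of_lt_of_le one_pos hx
  have h1 := hC x
  rw [norm_iteratedFDeriv_zero] at h1
  have hxn : ‖x‖ ^ m = x ^ (m:ℝ) := by
    rw [Real.norm_eq_abs, abs_of_pos hx0, Real.rpow_natCast]
  rw [Real.rpow_neg hx0.le]
  rw [hxn] at h1
  rw [inv_eq_one_div, mul_comm C, div_mul_eq_mul_div, le_div_iff₀ (by positivity), one_mul]
  linarith [h1]

lemma integrableOn_Ioi_schwartz (θ : SchwartzMap ℝ ℂ) (w : ℂ) :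
    IntegrableOn (fun x : ℝ => θ x * (x : ℂ) ^ w) (Ioi (1:ℝ)) := by
  set m : ℕ := ⌈w.re⌉₊ + 2 with hm
  obtain ⟨C, hC0, hC⟩ := schwartz_bound_ge_one θ m
  have hlt : w.re - m < -1 := by
    have := Nat.le_ceil w.re
    have : w.re ≤ (⌈w.re⌉₊ : ℝ) := this
    push_cast [hm]
    linarith
  apply Integrable.mono' (g := fun x => C * x ^ (w.re - (m:ℝ)))
  · exact (integrableOn_Ioi_rpow_of_lt hlt zero_lt_one).const_mul C
  · exact aesm_mul_cpow θ.continuous w measurableSet_Ioi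
      (fun x hx => show (0:ℝ) < x from lt_trans zero_lt_one hx)
  · rw [ae_restrict_iff' measurableSet_Ioi]
    refine ae_of_all _ fun x hx => ?_
    have hx1 : (1:ℝ) ≤ x := le_of_lt hx
    have hx0 : (0:ℝ) < x := lt_of_lt_of_le one_pos hx1
    rw [norm_mul, norm_cpow_real hx0, Real.rpow_sub hx0, div_eq_mul_inv, ← Real.rpow_neg hx0.le]
    calc ‖θ x‖ * x ^ w.re ≤ (C * x ^ (-(m:ℝ))) * x ^ w.re :=
          mul_le_mul_of_nonneg_right (hC x hx1) (Real.rpow_nonneg hx0.le _)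
      _ = C * (x ^ w.re * x ^ (-(m:ℝ))) := by ring

lemma tendsto_schwartz_cpow_atTop (θ : SchwartzMap ℝ ℂ) (w : ℂ) :
    Tendsto (fun x : ℝ => θ x * (x : ℂ) ^ w) atTop (𝓝 0) := by
  set m : ℕ := ⌈w.re⌉₊ + 2 with hm
  obtain ⟨C, hC0, hC⟩ := schwartz_bound_ge_one θ m
  have hlt : 0 < (m:ℝ) - w.re := by
    have : w.re ≤ (⌈w.re⌉₊ : ℝ) := Nat.le_ceil w.re
    push_cast [hm]; linarith
  apply squeeze_zero_norm' (a := fun x => C * x ^ (-((m:ℝ) - w.re)))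
  · filter_upwards [eventually_ge_atTop (1:ℝ)] with x hx1
    have hx0 : (0:ℝ) < x := lt_of_lt_of_le one_pos hx1
    rw [norm_mul, norm_cpow_real hx0 w, neg_sub, Real.rpow_sub hx0, div_eq_mul_inv,
      ← Real.rpow_neg hx0.le]
    calc ‖θ x‖ * x ^ w.re ≤ (C * x ^ (-(m:ℝ))) * x ^ w.re :=
          mul_le_mul_of_nonneg_right (hC x hx1) (Real.rpow_nonneg hx0.le _)
      _ = C * (x ^ w.re * x ^ (-(m:ℝ))) := by ring
  · simpa using (tendsto_rpow_neg_atTop hlt).const_mul C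

end MellinDecayAux
namespace MellinDecayAux2

lemma iteratedDerivWithin_Icc (φ : SchwartzMap ℝ ℂ) (k : ℕ) {x : ℝ}
    (hx : x ∈ Icc (0:ℝ) 1) :
    iteratedDerivWithin k (⇑φ) (Icc (0:ℝ) 1) x = iteratedDeriv k (⇑φ) x := by
  have h : HasFTaylorSeriesUpTo (k : ℕ∞) (⇑φ) (ftaylorSeries ℝ (⇑φ)) :=
    contDiff_iff_ftaylorSeries.mp (φ.smooth k)
  have h2 := (h.hasFTaylorSeriesUpToOn (Icc (0:ℝ) 1)).eq_iteratedFDerivWithin_of_uniqueDiffOn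
    (by exact_mod_cast le_rfl) (uniqueDiffOn_Icc zero_lt_one) hx
  rw [iteratedDerivWithin_eq_iteratedFDerivWithin, iteratedDeriv_eq_iteratedFDeriv, ← h2]
  rfl

lemma taylor_bound (φ : SchwartzMap ℝ ℂ) (N : ℕ) :
    ∃ C : ℝ, 0 ≤ C ∧ ∀ x ∈ Icc (0:ℝ) 1,
      ‖φ x - ∑ n ∈ range N, MellinDecayAux.coeffA φ n * (x : ℂ) ^ n‖ ≤ C * x ^ (N:ℝ) := by
  unfold MellinDecayAux.coeffA
  cases N with
  | zero =>
    obtain ⟨C, hC0, hC⟩ := φ.decay 0 0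
    refine ⟨C, hC0.le, fun x hx => ?_⟩
    have := hC x
    rw [norm_iteratedFDeriv_zero] at this
    simpa [Real.rpow_natCast] using this
  | succ M =>
    set C₀ : ℝ := SchwartzMap.seminorm ℝ 0 (M+1) φ with hC₀
    refine ⟨C₀ / M.factorial, by positivity, fun x hx => ?_⟩
    have hbd : ∀ y ∈ Icc (0:ℝ) 1, ‖iteratedDerivWithin (M+1) (⇑φ) (Icc (0:ℝ) 1) y‖ ≤ C₀ := by
      intro y hy
      rw [iteratedDerivWithin_Icc φ (M+1) hy]
      simpa using SchwartzMap.le_seminorm' ℝ 0 (M+1) φ y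
    have key := taylor_mean_remainder_bound (f := ⇑φ) (a := 0) (b := 1) (n := M)
      zero_le_one ((φ.smooth _).contDiffOn) hx hbd
    have hTay : taylorWithinEval (⇑φ) M (Icc (0:ℝ) 1) 0 x
        = ∑ n ∈ range (M+1), iteratedDeriv n (⇑φ) 0 / (n.factorial : ℂ) * (x : ℂ) ^ n := by
      rw [taylor_within_apply]
      refine Finset.sum_congr rfl fun k hk => ?_
      rw [iteratedDerivWithin_Icc φ k (by constructor <;> norm_num)]
      rw [real_smul]
      push_cast
      ring
    rw [hTay] at key
    calc ‖φ x - ∑ n ∈ range (M+1), iteratedDeriv n (⇑φ) 0 / (n.factorial : ℂ) * (x:ℂ) ^ n‖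
        ≤ C₀ * (x - 0) ^ (M+1) / M.factorial := key
      _ = C₀ / M.factorial * x ^ ((M+1 : ℕ) : ℝ) := by
          rw [sub_zero, Real.rpow_natCast]; ring

end MellinDecayAux2

namespace MellinDecayAux
open MellinDecayAux2

lemma hasDerivAt_cpow_div {s : ℂ} (hs : s ≠ 0) {x : ℝ} (hx : x ≠ 0) :
    HasDerivAt (fun y : ℝ => (y : ℂ) ^ s / s) ((x : ℂ) ^ (s - 1)) x := by
  have h := hasDerivAt_ofReal_cpow_const' hx (r := s - 1)
    (by intro h; apply hs; have : s = -1 + 1 := by rw [← h]; ring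
        simpa using this)
  simpa [sub_add_cancel] using h

lemma coeffA_deriv (φ : SchwartzMap ℝ ℂ) (i : ℕ) :
    coeffA (SchwartzMap.derivCLM ℝ ℂ φ) i = coeffA φ (i+1) * (i+1) := by
  unfold coeffA
  have hψ : ⇑(SchwartzMap.derivCLM ℝ ℂ φ) = deriv (⇑φ) := by
    funext x; exact SchwartzMap.derivCLM_apply ℝ φ x
  rw [hψ, ← iteratedDeriv_succ', Nat.factorial_succ]
  have h1 : ((i:ℂ)+1) ≠ 0 := Nat.cast_add_one_ne_zero i
  have h2 : (i.factorial : ℂ) ≠ 0 := Nat.cast_ne_zero.mpr (Nat.factorial_ne_zero i)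
  push_cast
  field_simp

lemma hasDerivAt_P (φ : SchwartzMap ℝ ℂ) (N : ℕ) (x : ℝ) :
    HasDerivAt (fun y : ℝ => ∑ n ∈ range N, coeffA φ n * (y : ℂ) ^ n)
      (∑ m ∈ range (N-1), coeffA (SchwartzMap.derivCLM ℝ ℂ φ) m * (x : ℂ) ^ m) x := by
  have base : ∀ n : ℕ, HasDerivAt (fun y : ℝ => coeffA φ n * (y : ℂ) ^ n)
      (coeffA φ n * (n * (x : ℂ) ^ (n - 1))) x := fun n =>
    ((hasDerivAt_pow n (x : ℂ)).comp_ofReal).const_mul _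
  have hsum := HasDerivAt.fun_sum (u := range N) (fun n _ => base n)
  refine hsum.congr_deriv ?_
  symm
  cases N with
  | zero => simp
  | succ M =>
    rw [Finset.sum_range_succ' (fun n => coeffA φ n * ((n:ℂ) * (x:ℂ) ^ (n-1))) M]
    simp only [Nat.cast_zero, zero_mul, mul_zero, add_zero, Nat.add_sub_cancel]
    refine Finset.sum_congr rfl fun i _ => ?_
    rw [coeffA_deriv φ i]
    push_cast
    ring

end MellinDecayAux

namespace MellinDecayAux
open MellinDecayAux2

lemma step (φ : SchwartzMap ℝ ℂ) (N : ℕ) (s : ℂ) (hre : 0 < (N:ℝ) + s.re)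
    (hp : ∀ m : ℕ, s + (m:ℂ) ≠ 0) :
    s * Gg φ N s = - Gg (SchwartzMap.derivCLM ℝ ℂ φ) (N - 1) (s + 1) := by
  have hs0 : s ≠ 0 := by simpa using hp 0
  obtain ⟨Cf, hCf0, hCf⟩ := taylor_bound φ N
  obtain ⟨Cg, hCg0, hCg⟩ := taylor_bound (SchwartzMap.derivCLM ℝ ℂ φ) (N-1)
  have hψx : ∀ x : ℝ, HasDerivAt (⇑φ) ((SchwartzMap.derivCLM ℝ ℂ φ) x) x := by
    intro x
    have := (φ.differentiableAt (x := x)).hasDerivAt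
    simpa [SchwartzMap.derivCLM_apply] using this
  have hfg : ∀ x : ℝ, HasDerivAt
      (fun y : ℝ => φ y - ∑ n ∈ range N, coeffA φ n * (y:ℂ)^n)
      (((SchwartzMap.derivCLM ℝ ℂ φ) x -
        ∑ n ∈ range (N-1), coeffA (SchwartzMap.derivCLM ℝ ℂ φ) n * (x:ℂ)^n)) x :=
    fun x => (hψx x).sub (hasDerivAt_P φ N x)
  have hfc : Continuous (fun y : ℝ => φ y - ∑ n ∈ range N, coeffA φ n * (y:ℂ)^n) := by
    apply φ.continuous.sub
    exact continuous_finset_sum _ fun n _ =>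
      continuous_const.mul (Complex.continuous_ofReal.pow n)
  have hgc : Continuous (fun y : ℝ =>
      (SchwartzMap.derivCLM ℝ ℂ φ) y - ∑ n ∈ range (N-1), coeffA (SchwartzMap.derivCLM ℝ ℂ φ) n * (y:ℂ)^n) := by
    apply (SchwartzMap.derivCLM ℝ ℂ φ).continuous.sub
    exact continuous_finset_sum _ fun n _ =>
      continuous_const.mul (Complex.continuous_ofReal.pow n)
  have he1 : (-1:ℝ) < ((N-1 : ℕ):ℝ) + s.re := by
    cases N with
    | zero => norm_num at hre ⊢; linarith
    | succ M => push_cast [Nat.add_sub_cancel] at hre ⊢; linarith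
  -- integrability on (0,1]
  have hint1 : IntegrableOn
      (fun x : ℝ => (φ x - ∑ n ∈ range N, coeffA φ n * (x:ℂ)^n) * (x:ℂ)^(s-1))
      (Ioc (0:ℝ) 1) := by
    apply integrableOn_Ioc_of_bound (C := Cf) (e := (N:ℝ) + s.re - 1)
    · exact aesm_mul_cpow hfc (s-1) measurableSet_Ioc (fun x hx => hx.1)
    · linarith
    · intro x hx
      have hx0 : 0 < x := hx.1
      rw [norm_mul, norm_cpow_real hx0, Complex.sub_re, Complex.one_re]
      calc ‖_‖ * x ^ (s.re - 1) ≤ (Cf * x ^ (N:ℝ)) * x ^ (s.re-1) :=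
            mul_le_mul_of_nonneg_right (hCf x ⟨hx.1.le, hx.2⟩) (Real.rpow_nonneg hx0.le _)
        _ = Cf * (x ^ (N:ℝ) * x ^ (s.re-1)) := by ring
        _ = Cf * x ^ ((N:ℝ) + s.re - 1) := by
            rw [← Real.rpow_add hx0]; ring_nf
  have hint2 : IntegrableOn
      (fun x : ℝ => ((SchwartzMap.derivCLM ℝ ℂ φ) x -
        ∑ n ∈ range (N-1), coeffA (SchwartzMap.derivCLM ℝ ℂ φ) n * (x:ℂ)^n) * (x:ℂ)^s)
      (Ioc (0:ℝ) 1) := by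
    apply integrableOn_Ioc_of_bound (C := Cg) (e := ((N-1:ℕ):ℝ) + s.re)
    · exact aesm_mul_cpow hgc s measurableSet_Ioc (fun x hx => hx.1)
    · exact he1
    · intro x hx
      have hx0 : 0 < x := hx.1
      rw [norm_mul, norm_cpow_real hx0]
      calc ‖_‖ * x ^ s.re ≤ (Cg * x ^ ((N-1:ℕ):ℝ)) * x ^ s.re :=
            mul_le_mul_of_nonneg_right (hCg x ⟨hx.1.le, hx.2⟩) (Real.rpow_nonneg hx0.le _)
        _ = Cg * (x ^ ((N-1:ℕ):ℝ) * x ^ s.re) := by ring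
        _ = Cg * x ^ (((N-1:ℕ):ℝ) + s.re) := by rw [← Real.rpow_add hx0]
  have hint2' : IntegrableOn
      (fun x : ℝ => ((SchwartzMap.derivCLM ℝ ℂ φ) x -
        ∑ n ∈ range (N-1), coeffA (SchwartzMap.derivCLM ℝ ℂ φ) n * (x:ℂ)^n) * ((x:ℂ)^s / s))
      (Ioc (0:ℝ) 1) := by
    have : (fun x : ℝ => ((SchwartzMap.derivCLM ℝ ℂ φ) x -
        ∑ n ∈ range (N-1), coeffA (SchwartzMap.derivCLM ℝ ℂ φ) n * (x:ℂ)^n) * ((x:ℂ)^s / s))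
        = fun x : ℝ => (((SchwartzMap.derivCLM ℝ ℂ φ) x -
        ∑ n ∈ range (N-1), coeffA (SchwartzMap.derivCLM ℝ ℂ φ) n * (x:ℂ)^n) * (x:ℂ)^s) / s := by
      funext x; ring
    rw [this]
    exact hint2.div_const s
  -- FTC on (0,1]
  have hderiv1 : ∀ x : ℝ, 0 < x → HasDerivAt
      (fun y : ℝ => (φ y - ∑ n ∈ range N, coeffA φ n * (y:ℂ)^n) * ((y:ℂ)^s / s))
      (((SchwartzMap.derivCLM ℝ ℂ φ) x -
          ∑ n ∈ range (N-1), coeffA (SchwartzMap.derivCLM ℝ ℂ φ) n * (x:ℂ)^n) * ((x:ℂ)^s / s)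
        + (φ x - ∑ n ∈ range N, coeffA φ n * (x:ℂ)^n) * (x:ℂ)^(s-1)) x :=
    fun x hx => (hfg x).mul (hasDerivAt_cpow_div hs0 hx.ne')
  have hten0 : Tendsto
      (fun x : ℝ => (φ x - ∑ n ∈ range N, coeffA φ n * (x:ℂ)^n) * ((x:ℂ)^s / s))
      (𝓝[>] (0:ℝ)) (𝓝 0) := by
    apply squeeze_zero_norm' (a := fun x => (Cf / ‖s‖) * x ^ ((N:ℝ) + s.re))
    · filter_upwards [Ioc_mem_nhdsGT zero_lt_one] with x hx
      have hx0 : 0 < x := hx.1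
      rw [norm_mul, norm_div, norm_cpow_real hx0]
      calc ‖_‖ * (x ^ s.re / ‖s‖) ≤ (Cf * x ^ (N:ℝ)) * (x ^ s.re / ‖s‖) := by
            apply mul_le_mul_of_nonneg_right (hCf x ⟨hx0.le, hx.2⟩)
            positivity
        _ = (Cf / ‖s‖) * (x ^ (N:ℝ) * x ^ s.re) := by ring
        _ = (Cf / ‖s‖) * x ^ ((N:ℝ) + s.re) := by rw [← Real.rpow_add hx0]
    · have hc : ContinuousAt (fun x : ℝ => x ^ ((N:ℝ) + s.re)) 0 :=
        Real.continuousAt_rpow_const 0 _ (Or.inr (by linarith))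
      have h0 := hc.tendsto.mono_left (nhdsWithin_le_nhds (s := Ioi (0:ℝ)))
      rw [Real.zero_rpow (ne_of_gt hre)] at h0
      simpa using h0.const_mul (Cf / ‖s‖)
  have hten1 : Tendsto
      (fun x : ℝ => (φ x - ∑ n ∈ range N, coeffA φ n * (x:ℂ)^n) * ((x:ℂ)^s / s))
      (𝓝[<] (1:ℝ))
      (𝓝 ((φ 1 - ∑ n ∈ range N, coeffA φ n * ((1:ℝ):ℂ)^n) * (((1:ℝ):ℂ)^s / s))) :=
    ((hderiv1 1 zero_lt_one).continuousAt).continuousWithinAt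
  have FTC1 := intervalIntegral.integral_eq_sub_of_hasDerivAt_of_tendsto
      (a := (0:ℝ)) (b := 1) zero_lt_one (fun x hx => hderiv1 x hx.1)
      ((intervalIntegrable_iff_integrableOn_Ioc_of_le zero_le_one).mpr (hint2'.add hint1))
      hten0 hten1
  rw [intervalIntegral.integral_of_le zero_le_one,
    integral_add hint2' hint1, sub_zero] at FTC1
  -- FTC on [1,∞)
  have hderiv2 : ∀ x : ℝ, 0 < x → HasDerivAt
      (fun y : ℝ => φ y * ((y:ℂ)^s / s))
      ((SchwartzMap.derivCLM ℝ ℂ φ) x * ((x:ℂ)^s / s) + φ x * (x:ℂ)^(s-1)) x :=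
    fun x hx => (hψx x).mul (hasDerivAt_cpow_div hs0 hx.ne')
  have hint3 : IntegrableOn (fun x : ℝ => φ x * (x:ℂ)^(s-1)) (Ioi (1:ℝ)) :=
    integrableOn_Ioi_schwartz φ (s-1)
  have hint4' : IntegrableOn
      (fun x : ℝ => (SchwartzMap.derivCLM ℝ ℂ φ) x * ((x:ℂ)^s / s)) (Ioi (1:ℝ)) := by
    have : (fun x : ℝ => (SchwartzMap.derivCLM ℝ ℂ φ) x * ((x:ℂ)^s / s))
        = fun x : ℝ => ((SchwartzMap.derivCLM ℝ ℂ φ) x * (x:ℂ)^s) / s := by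
      funext x; ring
    rw [this]
    exact (integrableOn_Ioi_schwartz (SchwartzMap.derivCLM ℝ ℂ φ) s).div_const s
  have hten2 : Tendsto (fun x : ℝ => φ x * ((x:ℂ)^s / s)) atTop (𝓝 0) := by
    have h := (tendsto_schwartz_cpow_atTop φ s).div_const s
    rw [zero_div] at h
    have heq : (fun x : ℝ => φ x * ((x:ℂ)^s / s))
        = fun x : ℝ => (φ x * (x:ℂ)^s) / s := by funext x; ring
    rw [heq]
    exact h
  have FTC2 := integral_Ioi_of_hasDerivAt_of_tendsto
      (a := (1:ℝ))
      (((hderiv2 1 zero_lt_one).continuousAt).continuousWithinAt)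
      (fun x hx => hderiv2 x (lt_trans zero_lt_one hx))
      (hint4'.add hint3) hten2
  rw [integral_add hint4' hint3, zero_sub] at FTC2
  -- the sum identity
  have hsum : s * (∑ n ∈ range N, coeffA φ n / (s + n)) =
      (∑ n ∈ range N, coeffA φ n)
        - ∑ n ∈ range (N-1), coeffA (SchwartzMap.derivCLM ℝ ℂ φ) n / (s + 1 + n) := by
    cases N with
    | zero => simp
    | succ M =>
      rw [Nat.add_sub_cancel, Finset.mul_sum]
      have hterm : ∀ n ∈ range (M+1), s * (coeffA φ n / (s + n)) =
          coeffA φ n - coeffA φ n * ((n:ℂ) / (s + n)) := by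
        intro n _
        have hsn := hp n
        field_simp
        ring
      rw [Finset.sum_congr rfl hterm, Finset.sum_sub_distrib]
      congr 1
      rw [Finset.sum_range_succ' (fun n => coeffA φ n * ((n:ℂ) / (s + n)))]
      simp only [Nat.cast_zero, zero_div, mul_zero, add_zero]
      refine Finset.sum_congr rfl fun i _ => ?_
      rw [coeffA_deriv φ i]
      push_cast
      rw [show s + ((i:ℂ)+1) = s + 1 + (i:ℂ) by ring, mul_div_assoc]
  -- assemble
  have hone : ((1:ℝ):ℂ) = 1 := Complex.ofReal_one
  have k1 : s * (∫ x in Ioc (0:ℝ) 1,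
        (φ x - ∑ n ∈ range N, coeffA φ n * (x:ℂ)^n) * (x:ℂ)^(s-1))
      = (φ 1 - ∑ n ∈ range N, coeffA φ n)
        - ∫ x in Ioc (0:ℝ) 1, ((SchwartzMap.derivCLM ℝ ℂ φ) x -
            ∑ n ∈ range (N-1), coeffA (SchwartzMap.derivCLM ℝ ℂ φ) n * (x:ℂ)^n) * (x:ℂ)^s := by
    have h5 : (∫ x in Ioc (0:ℝ) 1, ((SchwartzMap.derivCLM ℝ ℂ φ) x -
            ∑ n ∈ range (N-1), coeffA (SchwartzMap.derivCLM ℝ ℂ φ) n * (x:ℂ)^n) * ((x:ℂ)^s / s))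
        = (∫ x in Ioc (0:ℝ) 1, ((SchwartzMap.derivCLM ℝ ℂ φ) x -
            ∑ n ∈ range (N-1), coeffA (SchwartzMap.derivCLM ℝ ℂ φ) n * (x:ℂ)^n) * (x:ℂ)^s) / s := by
      rw [← integral_div]
      congr 1; funext x; ring
    rw [h5] at FTC1
    simp only [hone, one_pow, Complex.one_cpow] at FTC1
    field_simp at FTC1 ⊢
    linear_combination FTC1
  have k3 : s * (∫ x in Ioi (1:ℝ), φ x * (x:ℂ)^(s-1))
      = - φ 1 - ∫ x in Ioi (1:ℝ), (SchwartzMap.derivCLM ℝ ℂ φ) x * (x:ℂ)^s := by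
    have h5 : (∫ x in Ioi (1:ℝ), (SchwartzMap.derivCLM ℝ ℂ φ) x * ((x:ℂ)^s / s))
        = (∫ x in Ioi (1:ℝ), (SchwartzMap.derivCLM ℝ ℂ φ) x * (x:ℂ)^s) / s := by
      rw [← integral_div]
      congr 1; funext x; ring
    rw [h5] at FTC2
    simp only [hone, Complex.one_cpow] at FTC2
    field_simp at FTC2 ⊢
    linear_combination FTC2
  simp only [Gg, add_sub_cancel_right]
  linear_combination k1 + hsum + k3

open MellinDecayAux2

lemma iterate (k : ℕ) : ∀ (φ : SchwartzMap ℝ ℂ) (N : ℕ) (s : ℂ),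
    0 < (N:ℝ) + s.re → (∀ m : ℕ, s + (m:ℂ) ≠ 0) →
    (∏ j ∈ range k, (s + (j:ℂ))) * Gg φ N s
      = ((-1:ℂ))^k * Gg ((SchwartzMap.derivCLM ℝ ℂ)^[k] φ) (N - k) (s + (k:ℂ)) := by
  induction k with
  | zero => intro φ N s _ _; simp
  | succ k ih =>
    intro φ N s hre hp
    have hstep := step φ N s hre hp
    have hre' : 0 < ((N-1:ℕ):ℝ) + (s+1).re := by
      simp only [Complex.add_re, Complex.one_re]
      cases N with
      | zero => norm_num at hre ⊢; linarith
      | succ M => push_cast [Nat.add_sub_cancel] at hre ⊢; linarith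
    have hp' : ∀ m : ℕ, (s+1) + (m:ℂ) ≠ 0 := by
      intro m
      have := hp (m+1)
      push_cast at this
      rw [show s+1+(m:ℂ) = s + ((m:ℂ)+1) by ring]
      exact this
    have ih' := ih (SchwartzMap.derivCLM ℝ ℂ φ) (N-1) (s+1) hre' hp'
    have hprod : (∏ j ∈ range (k+1), (s + (j:ℂ)))
        = (∏ j ∈ range k, ((s+1) + (j:ℂ))) * s := by
      rw [Finset.prod_range_succ' (fun j => s + (j:ℂ))]
      simp only [Nat.cast_zero, add_zero]
      congr 1
      refine Finset.prod_congr rfl fun j _ => ?_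
      push_cast; ring
    rw [hprod, mul_assoc, hstep, mul_neg, ih']
    rw [Function.iterate_succ_apply, Nat.sub_sub,
      show s + 1 + (k:ℂ) = s + (((k+1 : ℕ)):ℂ) by push_cast; ring,
      show 1 + k = k + 1 from Nat.add_comm 1 k]
    ring

lemma Gg_zero_bound (ψ : SchwartzMap ℝ ℂ) (σ : ℝ) :
    ∃ B : ℝ, 0 ≤ B ∧ ∀ s : ℂ, s.re = σ → ‖Gg ψ 0 s‖ ≤ B := by
  refine ⟨(∫ x in Ioc (0:ℝ) 1, ‖ψ x‖ * x ^ (σ-1)) + ∫ x in Ioi (1:ℝ), ‖ψ x‖ * x ^ (σ-1),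
    add_nonneg
      (setIntegral_nonneg measurableSet_Ioc fun x hx => by
        have : (0:ℝ) < x := hx.1
        positivity)
      (setIntegral_nonneg measurableSet_Ioi fun x hx => by
        have : (0:ℝ) < x := lt_trans zero_lt_one hx
        positivity), ?_⟩
  intro s hs
  have h1 : Gg ψ 0 s = (∫ x in Ioc (0:ℝ) 1, ψ x * (x:ℂ)^(s-1))
      + ∫ x in Ioi (1:ℝ), ψ x * (x:ℂ)^(s-1) := by
    simp [Gg]
  rw [h1]
  refine (norm_add_le _ _).trans (add_le_add ?_ ?_) <;>
    refine (norm_integral_le_integral_norm _).trans (le_of_eq ?_)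
  · refine setIntegral_congr_fun measurableSet_Ioc fun x hx => ?_
    rw [norm_mul, norm_cpow_real hx.1, Complex.sub_re, Complex.one_re, hs]
  · refine setIntegral_congr_fun measurableSet_Ioi fun x hx => ?_
    rw [norm_mul, norm_cpow_real (lt_trans zero_lt_one hx), Complex.sub_re, Complex.one_re, hs]

end MellinDecayAux

open MellinDecayAux

/-- for a Schwartz function `φ`, a negative non-integer `c`, and
`N ∈ ℕ` with `N + c > 0`, the continuation `G_N` of the Mellin transform
satisfies `sup_{t∈ℝ} |t^α · G_N(c+it)| < ∞` for every `α ∈ ℕ`. -/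
theorem mellin_schwartz_continuation_decay (φ : SchwartzMap ℝ ℂ) (c : ℝ)
    (hc : c < 0) (hci : ∀ n : ℤ, c ≠ (n : ℝ)) (N : ℕ) (hN : 0 < (N : ℝ) + c)
    (α : ℕ) :
    let a : ℕ → ℂ := fun n => iteratedDeriv n (⇑φ) 0 / (n.factorial : ℂ)
    let G : ℂ → ℂ := fun s =>
      (∫ x in Ioc (0 : ℝ) 1,
          (φ x - ∑ n ∈ range N, a n * (x : ℂ) ^ n) * (x : ℂ) ^ (s - 1)) +
        (∑ n ∈ range N, a n / (s + (n : ℂ))) +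
        ∫ x in Ioi (1 : ℝ), φ x * (x : ℂ) ^ (s - 1)
    ∃ C : ℝ, ∀ t : ℝ, |t| ^ α * ‖G ((c : ℂ) + (t : ℂ) * Complex.I)‖ ≤ C := by
  intro a G
  set k := N + α with hk
  set ψk := (SchwartzMap.derivCLM ℝ ℂ)^[k] φ with hψk
  obtain ⟨B, hB0, hB⟩ := Gg_zero_bound ψk (c + k)
  have hd0 : ∀ j : ℕ, c + (j:ℝ) ≠ 0 := by
    intro j h
    exact hci (-(j:ℤ)) (by push_cast; linarith)
  set d : ℝ := ∏ j ∈ range k, |c + (j:ℝ)| with hd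
  have hdpos : 0 < d := Finset.prod_pos fun j _ => abs_pos.mpr (hd0 j)
  refine ⟨B / d + B, fun t => ?_⟩
  set s : ℂ := (c:ℂ) + (t:ℂ) * Complex.I with hs
  have hGeq : G s = Gg φ N s := rfl
  have hsre : s.re = c := by simp [hs]
  have hre : 0 < (N:ℝ) + s.re := by rw [hsre]; exact hN
  have hp : ∀ m : ℕ, s + (m:ℂ) ≠ 0 := by
    intro m h
    have h2 : (s + (m:ℂ)).re = 0 := by rw [h]; simp
    rw [Complex.add_re, hsre] at h2
    exact hd0 m (by simpa using h2)
  have key := iterate k φ N s hre hp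
  have hNk : N - k = 0 := by omega
  rw [hNk] at key
  have hskre : (s + (k:ℂ)).re = c + k := by simp [hs]
  have hB' := hB (s + (k:ℂ)) hskre
  have hnorm : (∏ j ∈ range k, ‖s + (j:ℂ)‖) * ‖Gg φ N s‖ ≤ B := by
    calc (∏ j ∈ range k, ‖s + (j:ℂ)‖) * ‖Gg φ N s‖
        = ‖(∏ j ∈ range k, (s + (j:ℂ))) * Gg φ N s‖ := by rw [norm_mul, norm_prod]
      _ = ‖((-1:ℂ))^k * Gg ψk 0 (s + (k:ℂ))‖ := by rw [key]
      _ = ‖Gg ψk 0 (s + (k:ℂ))‖ := by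
          rw [norm_mul, norm_pow, norm_neg, norm_one, one_pow, one_mul]
      _ ≤ B := hB'
  set Pt : ℝ := ∏ j ∈ range k, ‖s + (j:ℂ)‖ with hPt
  have hPt_d : d ≤ Pt := by
    refine Finset.prod_le_prod (fun j _ => abs_nonneg _) (fun j _ => ?_)
    have hj : (s + (j:ℂ)).re = c + j := by simp [hs]
    calc |c + (j:ℝ)| = |(s + (j:ℂ)).re| := by rw [hj]
      _ ≤ ‖s + (j:ℂ)‖ := by exact Complex.abs_re_le_norm _
  have hPt_t : |t| ^ k ≤ Pt := by
    calc |t| ^ k = ∏ _j ∈ range k, |t| := by rw [Finset.prod_const, Finset.card_range]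
      _ ≤ Pt := by
        refine Finset.prod_le_prod (fun _ _ => abs_nonneg t) (fun j _ => ?_)
        have hj : (s + (j:ℂ)).im = t := by simp [hs]
        calc |t| = |(s + (j:ℂ)).im| := by rw [hj]
          _ ≤ ‖s + (j:ℂ)‖ := by exact Complex.abs_im_le_norm _
  have hPt_pos : 0 < Pt := lt_of_lt_of_le hdpos hPt_d
  have hGle : ‖Gg φ N s‖ ≤ B / Pt := by
    rw [le_div_iff₀ hPt_pos]
    calc ‖Gg φ N s‖ * Pt = Pt * ‖Gg φ N s‖ := by ring
      _ ≤ B := hnorm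
  rw [hGeq]
  by_cases ht : |t| ≤ 1
  · have h1 : |t| ^ α ≤ 1 := pow_le_one₀ (abs_nonneg t) ht
    have h3 : |t| ^ α * ‖Gg φ N s‖ ≤ 1 * (B / Pt) :=
      mul_le_mul h1 hGle (norm_nonneg _) zero_le_one
    have h2 : B / Pt ≤ B / d := div_le_div_of_nonneg_left hB0 hdpos hPt_d
    have h4 : (0:ℝ) ≤ B := hB0
    linarith
  · push_neg at ht
    have h1 : |t| ^ α ≤ |t| ^ k := pow_le_pow_right₀ ht.le (by omega)
    have h3 : |t| ^ α * ‖Gg φ N s‖ ≤ |t| ^ k * (B / Pt) :=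
      mul_le_mul h1 hGle (norm_nonneg _) (by positivity)
    have h2 : |t| ^ k * (B / Pt) ≤ B := by
      rw [mul_comm, div_mul_eq_mul_div, div_le_iff₀ hPt_pos]
      exact mul_le_mul_of_nonneg_left hPt_t hB0
    have h5 : 0 ≤ B / d := div_nonneg hB0 hdpos.le
    linarith
end

section
/- Let φ : ℝ → ℂ be a Schwartz function, let c be a negative real number that is not an integer, and let N ∈ ℕ satisfy N + c > 0. With a_n = φ^{(n)}(0)/n! and G_N(s) = ∫₀¹ (φ(x) − Σ_{n=0}^{N−1} a_n x^n) x^{s−1} dx + Σ_{n=0}^{N−1} a_n/(s+n) + ∫₁^∞ φ(x) x^{s−1} dx, one has G_N(c+it) → 0 as |t| → ∞ (Riemann–Lebesgue lemma for the analytically continued Mellin transform). -/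
open MeasureTheory Complex Set Finset Filter

open scoped FourierTransform

/-- Riemann–Lebesgue for the continued Mellin transform: for a
Schwartz function `φ`, a negative non-integer `c`, and `N ∈ ℕ` with `N + c > 0`,
`G_N(c+it) → 0` as `|t| → ∞`. -/
theorem mellin_schwartz_riemann_lebesgue (φ : SchwartzMap ℝ ℂ) (c : ℝ)
    (hc : c < 0) (hci : ∀ n : ℤ, c ≠ (n : ℝ)) (N : ℕ) (hN : 0 < (N : ℝ) + c) :
    let a : ℕ → ℂ := fun n => iteratedDeriv n (⇑φ) 0 / (n.factorial : ℂ)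
    let G : ℂ → ℂ := fun s =>
      (∫ x in Ioc (0 : ℝ) 1,
          (φ x - ∑ n ∈ range N, a n * (x : ℂ) ^ n) * (x : ℂ) ^ (s - 1)) +
        (∑ n ∈ range N, a n / (s + (n : ℂ))) +
        ∫ x in Ioi (1 : ℝ), φ x * (x : ℂ) ^ (s - 1)
    Tendsto (fun t : ℝ => G ((c : ℂ) + (t : ℂ) * Complex.I)) (cocompact ℝ)
      (nhds 0) := by
  intro a G
  -- the modified function
  set ψ : ℝ → ℂ := fun x =>
    if x ≤ 1 then φ x - ∑ n ∈ range N, a n * (x : ℂ) ^ n else φ x with hψdef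
  have hψmeas : Measurable ψ := by
    apply Measurable.ite measurableSet_Iic
    · exact (φ.continuous.sub (continuous_finset_sum _ fun n _ =>
        continuous_const.mul (Complex.continuous_ofReal.pow n))).measurable
    · exact φ.continuous.measurable
  have hψae : AEStronglyMeasurable ψ (volume.restrict (Ioi (0:ℝ))) :=
    hψmeas.aestronglyMeasurable
  -- N is positive
  have hN1 : 1 ≤ N := by
    by_contra h
    push_neg at h
    interval_cases N
    · simp at hN; linarith
  obtain ⟨n, rfl⟩ : ∃ n : ℕ, N = n + 1 := ⟨N - 1, by omega⟩
  have hN' : 0 < (n : ℝ) + 1 + c := by push_cast at hN; linarith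
  -- Taylor estimate near 0
  obtain ⟨C, hC⟩ := exists_taylor_mean_remainder_bound (zero_le_one)
    ((φ.smooth (n + 1 : ℕ)).contDiffOn : ContDiffOn ℝ (n+1) (⇑φ) (Icc (0:ℝ) 1))
  have hiter : ∀ k : ℕ, iteratedDerivWithin k (⇑φ) (Icc (0:ℝ) 1) 0 = iteratedDeriv k (⇑φ) 0 := by
    intro k
    have h1 : HasFTaylorSeriesUpToOn (⊤ : ℕ∞) (⇑φ) (ftaylorSeries ℝ (⇑φ)) (Icc (0:ℝ) 1) :=
      (contDiff_iff_ftaylorSeries.mp (φ.smooth ⊤)).hasFTaylorSeriesUpToOn _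
    have h2 := h1.eq_iteratedFDerivWithin_of_uniqueDiffOn (m := k) (mod_cast le_top)
      (uniqueDiffOn_Icc one_pos) (left_mem_Icc.2 zero_le_one)
    rw [iteratedDerivWithin_eq_iteratedFDerivWithin, iteratedDeriv_eq_iteratedFDeriv, ← h2]
    rfl
  have hTay : ∀ x ∈ Icc (0:ℝ) 1,
      ‖φ x - ∑ k ∈ range (n+1), a k * (x : ℂ) ^ k‖ ≤ C * x ^ (n + 1) := by
    intro x hx
    have h := hC x hx
    rw [taylor_within_apply] at h
    have heq : ∑ k ∈ range (n+1), (((k.factorial : ℝ))⁻¹ * (x - 0) ^ k) •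
        iteratedDerivWithin k (⇑φ) (Icc (0:ℝ) 1) 0
        = ∑ k ∈ range (n+1), a k * (x : ℂ) ^ k := by
      refine Finset.sum_congr rfl fun k _ => ?_
      rw [hiter k]
      simp only [a, sub_zero, Complex.real_smul]
      push_cast
      have : (k.factorial : ℂ) ≠ 0 := Nat.cast_ne_zero.2 k.factorial_ne_zero
      field_simp
    rw [heq, sub_zero] at h
    exact h
  set C' : ℝ := max C 0 with hC'
  have hTay' : ∀ x ∈ Ioc (0:ℝ) 1, ‖ψ x‖ ≤ C' * x ^ ((n:ℝ) + 1 + c - 1 - (c - 1)) := by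
    intro x hx
    have hx0 : (0:ℝ) < x := hx.1
    have : ((n:ℝ) + 1 + c - 1 - (c - 1)) = ((n+1 : ℕ) : ℝ) := by push_cast; ring
    rw [this, Real.rpow_natCast]
    have := hTay x ⟨hx0.le, hx.2⟩
    have hψx : ψ x = φ x - ∑ k ∈ range (n+1), a k * (x : ℂ) ^ k := by
      simp [ψ, hx.2]
    rw [hψx]
    calc ‖_‖ ≤ C * x ^ (n+1) := this
      _ ≤ C' * x ^ (n+1) := by
          apply mul_le_mul_of_nonneg_right (le_max_left _ _) (by positivity)
  -- integrability of the Mellin integrand for re s = c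
  have hint : ∀ s : ℂ, s.re = c →
      IntegrableOn (fun x : ℝ => (x : ℂ) ^ (s - 1) • ψ x) (Ioi (0:ℝ)) := by
    intro s hs
    have h1 : IntegrableOn (fun x : ℝ => (x : ℂ) ^ (s - 1) • ψ x) (Ioc (0:ℝ) 1) := by
      rw [mellin_convergent_iff_norm Ioc_subset_Ioi_self measurableSet_Ioc hψae, hs]
      have hbig : IntegrableOn (fun x : ℝ => C' * x ^ ((n:ℝ) + 1 + c - 1)) (Ioc (0:ℝ) 1) := by
        have : IntervalIntegrable (fun x : ℝ => x ^ ((n:ℝ) + 1 + c - 1)) volume 0 1 :=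
          intervalIntegral.intervalIntegrable_rpow' (by linarith)
        rw [intervalIntegrable_iff_integrableOn_Ioc_of_le zero_le_one] at this
        exact this.const_mul _
      refine Integrable.mono' hbig ?_ ?_
      · refine AEStronglyMeasurable.mul ?_ hψmeas.norm.aestronglyMeasurable
        refine ((continuousOn_of_forall_continuousAt fun x hx =>
          Real.continuousAt_rpow_const _ _ (Or.inl (ne_of_gt hx.1))).aestronglyMeasurable
          measurableSet_Ioc)
      · refine (ae_restrict_iff' measurableSet_Ioc).2 (Eventually.of_forall fun x hx => ?_)
        have hx0 : (0:ℝ) < x := hx.1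
        have hb := hTay' x hx
        have hnn : (0:ℝ) ≤ x ^ (c - 1) := Real.rpow_nonneg hx0.le _
        calc ‖x ^ (c - 1) * ‖ψ x‖‖ = x ^ (c - 1) * ‖ψ x‖ := by
              rw [Real.norm_eq_abs, _root_.abs_of_nonneg (by positivity)]
          _ ≤ x ^ (c - 1) * (C' * x ^ ((n:ℝ) + 1 + c - 1 - (c - 1))) :=
              mul_le_mul_of_nonneg_left hb hnn
          _ = C' * (x ^ (c - 1) * x ^ ((n:ℝ) + 1 + c - 1 - (c - 1))) := by ring
          _ = C' * x ^ ((n:ℝ) + 1 + c - 1) := by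
              rw [← Real.rpow_add hx0]
              ring_nf

    have h2 : IntegrableOn (fun x : ℝ => (x : ℂ) ^ (s - 1) • ψ x) (Ioi (1:ℝ)) := by
      rw [mellin_convergent_iff_norm (Set.Ioi_subset_Ioi zero_le_one)
        measurableSet_Ioi hψae, hs]
      obtain ⟨D, -, hD⟩ := φ.decay 1 0
      have hbig : IntegrableOn (fun x : ℝ => D * x ^ (c - 2)) (Ioi (1:ℝ)) :=
        (integrableOn_Ioi_rpow_of_lt (by linarith) zero_lt_one).const_mul _
      refine Integrable.mono' hbig ?_ ?_
      · refine AEStronglyMeasurable.mul ?_ hψmeas.norm.aestronglyMeasurable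
        refine ((continuousOn_of_forall_continuousAt fun x hx =>
          Real.continuousAt_rpow_const _ _
            (Or.inl (ne_of_gt (lt_trans zero_lt_one hx)))).aestronglyMeasurable
          measurableSet_Ioi)
      · refine (ae_restrict_iff' measurableSet_Ioi).2 (Eventually.of_forall fun x hx => ?_)
        have hx1 : (1:ℝ) < x := hx
        have hx0 : (0:ℝ) < x := lt_trans zero_lt_one hx1
        have hψx : ψ x = φ x := by simp [ψ, not_le.2 hx1]
        have hφb : ‖φ x‖ ≤ D / x := by
          have h := hD x
          rw [norm_iteratedFDeriv_zero, pow_one, Real.norm_eq_abs,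
            _root_.abs_of_pos hx0] at h
          rw [le_div_iff₀ hx0]
          nlinarith
        calc ‖x ^ (c - 1) * ‖ψ x‖‖ = x ^ (c - 1) * ‖φ x‖ := by
              rw [hψx, Real.norm_eq_abs, _root_.abs_of_nonneg
                (mul_nonneg (Real.rpow_nonneg hx0.le _) (norm_nonneg _))]
          _ ≤ x ^ (c - 1) * (D / x) :=
              mul_le_mul_of_nonneg_left hφb (Real.rpow_nonneg hx0.le _)
          _ = D * (x ^ (c - 1) * x ^ (-1 : ℝ)) := by
              rw [Real.rpow_neg_one]; field_simp
          _ = D * x ^ (c - 2) := by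
              rw [← Real.rpow_add hx0]; ring_nf
    have := Set.Ioc_union_Ioi_eq_Ioi (zero_le_one (α := ℝ))
    rw [← this]
    exact h1.union h2
  -- Equality of the two integrals with the mellin transform of ψ
  have hsum : ∀ t : ℝ,
      (∫ x in Ioc (0 : ℝ) 1,
          (φ x - ∑ k ∈ range (n+1), a k * (x : ℂ) ^ k) *
            (x : ℂ) ^ ((c : ℂ) + (t : ℂ) * Complex.I - 1)) +
        (∫ x in Ioi (1 : ℝ), φ x * (x : ℂ) ^ ((c : ℂ) + (t : ℂ) * Complex.I - 1))
        = mellin ψ ((c : ℂ) + (t : ℂ) * Complex.I) := by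
    intro t
    set s : ℂ := (c : ℂ) + (t : ℂ) * Complex.I with hsdef
    have hs : s.re = c := by simp [hsdef]
    have e1 : (∫ x in Ioc (0 : ℝ) 1,
        (φ x - ∑ k ∈ range (n+1), a k * (x : ℂ) ^ k) * (x : ℂ) ^ (s - 1))
        = ∫ x in Ioc (0 : ℝ) 1, (x : ℂ) ^ (s - 1) • ψ x := by
      refine setIntegral_congr_fun measurableSet_Ioc fun x hx => ?_
      simp only [ψ, hx.2, if_true, smul_eq_mul]
      ring
    have e2 : (∫ x in Ioi (1 : ℝ), φ x * (x : ℂ) ^ (s - 1))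
        = ∫ x in Ioi (1 : ℝ), (x : ℂ) ^ (s - 1) • ψ x := by
      refine setIntegral_congr_fun measurableSet_Ioi fun x hx => ?_
      simp only [ψ, not_le.2 (show (1:ℝ) < x from hx), if_false, smul_eq_mul]
      ring
    rw [e1, e2, mellin, ← Set.Ioc_union_Ioi_eq_Ioi (zero_le_one (α := ℝ)),
      setIntegral_union Set.Ioc_disjoint_Ioi_same measurableSet_Ioi
        (((hint s hs).mono_set Ioc_subset_Ioi_self))
        ((hint s hs).mono_set (fun x hx => show (0:ℝ) < x from lt_trans zero_lt_one hx))]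
  -- The pole-sum term tends to zero
  have hpoles : Tendsto (fun t : ℝ =>
      ∑ k ∈ range (n+1), a k / ((c : ℂ) + (t : ℂ) * Complex.I + (k : ℂ)))
      (cocompact ℝ) (nhds 0) := by
    have : (0:ℂ) = ∑ k ∈ range (n+1), (0:ℂ) := by simp
    rw [this]
    refine tendsto_finset_sum _ fun k _ => ?_
    have hb : Tendsto (fun t : ℝ => (c : ℂ) + (t : ℂ) * Complex.I + (k : ℂ))
        (cocompact ℝ) (Bornology.cobounded ℂ) := by
      rw [← tendsto_norm_atTop_iff_cobounded]
      refine tendsto_atTop_mono (fun t => ?_) tendsto_norm_cocompact_atTop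
      have him : ((c : ℂ) + (t : ℂ) * Complex.I + (k : ℂ)).im = t := by simp
      calc ‖t‖ = |((c : ℂ) + (t : ℂ) * Complex.I + (k : ℂ)).im| := by
            rw [him, Real.norm_eq_abs]
        _ ≤ ‖(c : ℂ) + (t : ℂ) * Complex.I + (k : ℂ)‖ := Complex.abs_im_le_norm _
    have hinv : Tendsto (fun t : ℝ =>
        ((c : ℂ) + (t : ℂ) * Complex.I + (k : ℂ))⁻¹) (cocompact ℝ) (nhds 0) :=
      tendsto_inv₀_cobounded.comp hb
    simpa [div_eq_mul_inv] using hinv.const_mul (a k)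
  -- The mellin part tends to zero by Riemann–Lebesgue
  have hmellin : Tendsto (fun t : ℝ => mellin ψ ((c : ℂ) + (t : ℂ) * Complex.I))
      (cocompact ℝ) (nhds 0) := by
    have heq : ∀ t : ℝ, mellin ψ ((c : ℂ) + (t : ℂ) * Complex.I)
        = 𝓕 (fun u : ℝ => Real.exp (-c * u) • ψ (Real.exp (-u))) (t / (2 * Real.pi)) := by
      intro t
      rw [mellin_eq_fourier]
      congr 1
      simp
    simp_rw [heq]
    have hdiv : Tendsto (fun t : ℝ => t / (2 * Real.pi)) (cocompact ℝ) (cocompact ℝ) := by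
      have hne : (2 * Real.pi) ≠ 0 := by positivity
      have h := (Homeomorph.mulRight₀ (2 * Real.pi)⁻¹ (inv_ne_zero hne)).map_cocompact
      simp only [div_eq_mul_inv]
      exact h.le
    exact (Real.zero_at_infty_fourier
      (fun u : ℝ => Real.exp (-c * u) • ψ (Real.exp (-u)))).comp hdiv
  -- combine
  have htot := hmellin.add hpoles
  rw [add_zero] at htot
  refine htot.congr fun t => ?_
  simp only [G]
  rw [← hsum t]
  ring
end

section
/- Let φ : ℝ → ℂ be a Schwartz function and for t ∈ ℝ, t ≠ 0, define G₀(it) = ∫₀¹ (φ(x) − φ(0)) x^{it−1} dx + φ(0)/(it) + ∫₁^∞ φ(x) x^{it−1} dx. Then t·G₀(it) → 0 as |t| → ∞. -/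
open MeasureTheory Complex Set Filter
open scoped Real FourierTransform

namespace MellinDecayAux

/-- Integration by parts identity for the continued Mellin transform on the imaginary axis. -/
lemma ibp (φ : SchwartzMap ℝ ℂ) (t : ℝ) (ht : t ≠ 0) :
    (∫ x in Ioc (0 : ℝ) 1, (φ x - φ 0) * (x : ℂ) ^ ((t : ℂ) * Complex.I - 1)) +
      φ 0 / ((t : ℂ) * Complex.I) +
      (∫ x in Ioi (1 : ℝ), φ x * (x : ℂ) ^ ((t : ℂ) * Complex.I - 1))
    = -(1 / ((t : ℂ) * Complex.I)) *
        ∫ x in Ioi (0 : ℝ), deriv φ x * (x : ℂ) ^ ((t : ℂ) * Complex.I) := by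
  set s : ℂ := (t : ℂ) * Complex.I with hs_def
  have hs : s ≠ 0 := mul_ne_zero (ofReal_ne_zero.2 ht) I_ne_zero
  have hsnorm : (0 : ℝ) < ‖s‖ := norm_pos_iff.2 hs
  -- the antiderivative of x ↦ x^(s-1)
  have hH : ∀ x : ℝ, x ≠ 0 → HasDerivAt (fun y : ℝ => (y : ℂ) ^ s / s) ((x : ℂ) ^ (s - 1)) x := by
    intro x hx
    have h1 : s - 1 ≠ -1 := fun h => hs (by linear_combination h)
    have := hasDerivAt_ofReal_cpow_const' hx h1
    simpa [sub_add_cancel] using this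
  have hφdiff : ∀ x : ℝ, HasDerivAt φ (deriv φ x) x :=
    fun x => (φ.differentiable x).hasDerivAt
  have hcontd : Continuous (deriv φ) := (φ.smooth ⊤).continuous_deriv (by exact_mod_cast le_top)
  -- abbreviations
  set g : ℝ → ℂ := fun x => deriv φ x * ((x : ℂ) ^ s / s) with hg_def
  set h₁ : ℝ → ℂ := fun x => (φ x - φ 0) * (x : ℂ) ^ (s - 1) with hh1_def
  set h₂ : ℝ → ℂ := fun x => φ x * (x : ℂ) ^ (s - 1) with hh2_def
  set F₁ : ℝ → ℂ := fun x => (φ x - φ 0) * ((x : ℂ) ^ s / s) with hF1_def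
  set F₂ : ℝ → ℂ := fun x => φ x * ((x : ℂ) ^ s / s) with hF2_def
  -- derivatives
  have hF₁deriv : ∀ x : ℝ, 0 < x → HasDerivAt F₁ (g x + h₁ x) x := by
    intro x hx
    have := ((hφdiff x).sub_const (φ 0)).mul (hH x hx.ne')
    -- derivative : deriv φ x * (x^s/s) + (φ x - φ 0) * x^(s-1)
    convert this using 1
    all_goals rfl
  have hF₂deriv : ∀ x : ℝ, 0 < x → HasDerivAt F₂ (g x + h₂ x) x := by
    intro x hx
    have := (hφdiff x).mul (hH x hx.ne')
    convert this using 1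
    all_goals rfl
  -- norms of powers
  have hns : ∀ x : ℝ, 0 < x → ‖(x : ℂ) ^ s‖ = 1 := by
    intro x hx
    rw [norm_cpow_eq_rpow_re_of_pos hx]
    simp [hs_def]
  have hns1 : ∀ x : ℝ, 0 < x → ‖(x : ℂ) ^ (s - 1)‖ = x⁻¹ := by
    intro x hx
    rw [norm_cpow_eq_rpow_re_of_pos hx]
    simp [hs_def, Real.rpow_neg_one]
  -- bound on deriv φ and Lipschitz bound
  obtain ⟨M, hM0, hM⟩ : ∃ M : ℝ, 0 ≤ M ∧ ∀ x : ℝ, ‖deriv φ x‖ ≤ M := by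
    refine ⟨SchwartzMap.seminorm ℝ 0 0 (SchwartzMap.derivCLM ℝ ℂ φ), apply_nonneg _ _, fun x => ?_⟩
    simpa [SchwartzMap.derivCLM_apply] using
      SchwartzMap.norm_le_seminorm ℝ (SchwartzMap.derivCLM ℝ ℂ φ) x
  have hLip : ∀ x : ℝ, ‖φ x - φ 0‖ ≤ M * |x| := by
    intro x
    have := convex_univ.norm_image_sub_le_of_norm_deriv_le (f := ⇑φ)
      (fun y _ => φ.differentiable y) (fun y _ => hM y) (mem_univ 0) (mem_univ x)
    simpa using this
  -- continuity of powers on Ioi 0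
  have hcpow : ∀ r : ℂ, ContinuousOn (fun x : ℝ => (x : ℂ) ^ r) (Ioi 0) := by
    intro r x hx
    exact (Complex.continuousAt_ofReal_cpow_const x r (Or.inr (ne_of_gt hx))).continuousWithinAt
  have hg_cont : ContinuousOn g (Ioi 0) :=
    (hcontd.continuousOn).mul ((hcpow s).div_const s)
  have hh₁_cont : ContinuousOn h₁ (Ioi 0) :=
    ((φ.continuous.sub continuous_const).continuousOn).mul (hcpow (s - 1))
  have hh₂_cont : ContinuousOn h₂ (Ioi 0) :=
    (φ.continuous.continuousOn).mul (hcpow (s - 1))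
  -- integrability on Ioc 0 1
  have hIoc_sub : Ioc (0 : ℝ) 1 ⊆ Ioi 0 := Ioc_subset_Ioi_self
  have hIoi1_sub : Ioi (1 : ℝ) ⊆ Ioi 0 := Ioi_subset_Ioi zero_le_one
  have hg_int_Ioc : IntegrableOn g (Ioc (0 : ℝ) 1) := by
    refine Integrable.mono' (g := fun _ => M * ‖s‖⁻¹)
      (integrableOn_const (C := M * ‖s‖⁻¹) measure_Ioc_lt_top.ne)
      ((hg_cont.mono hIoc_sub).aestronglyMeasurable measurableSet_Ioc) ?_
    filter_upwards [ae_restrict_mem measurableSet_Ioc] with x hx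
    have hx0 : 0 < x := hx.1
    have : ‖g x‖ = ‖deriv φ x‖ * ‖s‖⁻¹ := by
      simp [hg_def, norm_mul, norm_div, hns x hx0]
    rw [this]
    exact mul_le_mul_of_nonneg_right (hM x) (by positivity)
  have hh₁_int_Ioc : IntegrableOn h₁ (Ioc (0 : ℝ) 1) := by
    refine Integrable.mono' (g := fun _ => M)
      (integrableOn_const (C := M) measure_Ioc_lt_top.ne)
      ((hh₁_cont.mono hIoc_sub).aestronglyMeasurable measurableSet_Ioc) ?_
    filter_upwards [ae_restrict_mem measurableSet_Ioc] with x hx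
    have hx0 : 0 < x := hx.1
    have : ‖h₁ x‖ = ‖φ x - φ 0‖ * x⁻¹ := by
      simp [hh1_def, norm_mul, hns1 x hx0]
    rw [this]
    calc ‖φ x - φ 0‖ * x⁻¹ ≤ (M * |x|) * x⁻¹ :=
          mul_le_mul_of_nonneg_right (hLip x) (by positivity)
      _ = M := by rw [abs_of_pos hx0]; field_simp
  -- integrability on Ioi 1
  have hderiv_int : Integrable (fun x => deriv φ x) :=
    by exact ((SchwartzMap.derivCLM ℝ ℂ φ).integrable (μ := volume)).congr (Eventually.of_forall fun x => by simp)
  have hg_int_Ioi1 : IntegrableOn g (Ioi (1 : ℝ)) := by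
    refine Integrable.mono' (g := fun x => ‖deriv φ x‖ * ‖s‖⁻¹)
      ((hderiv_int.norm.mul_const _).integrableOn)
      ((hg_cont.mono hIoi1_sub).aestronglyMeasurable measurableSet_Ioi) ?_
    filter_upwards [ae_restrict_mem measurableSet_Ioi] with x hx
    have hx0 : (0 : ℝ) < x := lt_trans zero_lt_one hx
    simp [hg_def, norm_mul, norm_div, hns x hx0]
  have hh₂_int_Ioi1 : IntegrableOn h₂ (Ioi (1 : ℝ)) := by
    refine Integrable.mono' (g := fun x => ‖φ x‖)
      (φ.integrable.norm.integrableOn)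
      ((hh₂_cont.mono hIoi1_sub).aestronglyMeasurable measurableSet_Ioi) ?_
    filter_upwards [ae_restrict_mem measurableSet_Ioi] with x hx
    have hx0 : (0 : ℝ) < x := lt_trans zero_lt_one hx
    have : ‖h₂ x‖ = ‖φ x‖ * x⁻¹ := by simp [hh2_def, norm_mul, hns1 x hx0]
    rw [this]
    calc ‖φ x‖ * x⁻¹ ≤ ‖φ x‖ * 1 :=
          mul_le_mul_of_nonneg_left (by rw [inv_le_one_iff₀]; right; exact hx.le) (norm_nonneg _)
      _ = ‖φ x‖ := mul_one _
  -- limit of F₁ at 0⁺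
  have hF₁lim : Tendsto F₁ (nhdsWithin 0 (Ioi 0)) (nhds 0) := by
    apply squeeze_zero_norm' (a := fun x => (M * ‖s‖⁻¹) * x)
    · filter_upwards [self_mem_nhdsWithin] with x (hx : 0 < x)
      have : ‖F₁ x‖ = ‖φ x - φ 0‖ * ‖s‖⁻¹ := by
        simp [hF1_def, norm_mul, norm_div, hns x hx]
      rw [this]
      calc ‖φ x - φ 0‖ * ‖s‖⁻¹ ≤ (M * |x|) * ‖s‖⁻¹ :=
            mul_le_mul_of_nonneg_right (hLip x) (by positivity)
        _ = (M * ‖s‖⁻¹) * x := by rw [abs_of_pos hx]; ring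
    · have : Tendsto (fun x : ℝ => (M * ‖s‖⁻¹) * x) (nhds 0) (nhds 0) :=
        (continuous_const.mul continuous_id).tendsto' 0 0 (by simp)
      exact this.mono_left nhdsWithin_le_nhds
  -- limit of F₂ at ∞
  have hF₂lim : Tendsto F₂ atTop (nhds 0) := by
    obtain ⟨C, hC⟩ : ∃ C : ℝ, ∀ x : ℝ, |x| * ‖φ x‖ ≤ C := by
      refine ⟨SchwartzMap.seminorm ℝ 1 0 φ, fun x => ?_⟩
      have := SchwartzMap.le_seminorm ℝ 1 0 φ x
      simpa [norm_iteratedFDeriv_zero] using this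
    apply squeeze_zero_norm' (a := fun x => (C * ‖s‖⁻¹) * x⁻¹)
    · filter_upwards [Ioi_mem_atTop (0 : ℝ)] with x (hx : 0 < x)
      have : ‖F₂ x‖ = ‖φ x‖ * ‖s‖⁻¹ := by
        simp [hF2_def, norm_mul, norm_div, hns x hx]
      rw [this]
      have hφx : ‖φ x‖ ≤ C * x⁻¹ := by
        have := hC x
        rw [abs_of_pos hx] at this
        rw [← le_div_iff₀' hx] at this
        simpa [div_eq_mul_inv, mul_comm] using this
      calc ‖φ x‖ * ‖s‖⁻¹ ≤ (C * x⁻¹) * ‖s‖⁻¹ :=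
            mul_le_mul_of_nonneg_right hφx (by positivity)
        _ = (C * ‖s‖⁻¹) * x⁻¹ := by ring
    · simpa using tendsto_inv_atTop_zero.const_mul (C * ‖s‖⁻¹)
  -- FTC on (0,1]
  have key1 : ∫ x in Ioc (0 : ℝ) 1, (g x + h₁ x) = F₁ 1 := by
    rw [← intervalIntegral.integral_of_le zero_le_one]
    have := intervalIntegral.integral_eq_sub_of_hasDerivAt_of_tendsto (f := F₁)
      (f' := fun x => g x + h₁ x) zero_lt_one
      (fun x hx => hF₁deriv x hx.1)
      ((intervalIntegrable_iff_integrableOn_Ioc_of_le zero_le_one).2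
        (hg_int_Ioc.add hh₁_int_Ioc))
      hF₁lim ((hF₁deriv 1 zero_lt_one).continuousAt.continuousWithinAt)
    rw [this, sub_zero]
  -- FTC on [1,∞)
  have key2 : ∫ x in Ioi (1 : ℝ), (g x + h₂ x) = 0 - F₂ 1 :=
    integral_Ioi_of_hasDerivAt_of_tendsto'
      (fun x hx => hF₂deriv x (lt_of_lt_of_le zero_lt_one hx))
      (hg_int_Ioi1.add hh₂_int_Ioi1) hF₂lim
  -- split the integrals
  have split1 : ∫ x in Ioc (0 : ℝ) 1, h₁ x = F₁ 1 - ∫ x in Ioc (0 : ℝ) 1, g x := by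
    rw [← key1, integral_add hg_int_Ioc hh₁_int_Ioc]; ring
  have split2 : ∫ x in Ioi (1 : ℝ), h₂ x = -F₂ 1 - ∫ x in Ioi (1 : ℝ), g x := by
    have h := key2
    rw [integral_add hg_int_Ioi1 hh₂_int_Ioi1] at h
    linear_combination h
  have hunion : ∫ x in Ioi (0 : ℝ), g x
      = (∫ x in Ioc (0 : ℝ) 1, g x) + ∫ x in Ioi (1 : ℝ), g x := by
    rw [← Ioc_union_Ioi_eq_Ioi (zero_le_one (α := ℝ)),
      setIntegral_union (Ioc_disjoint_Ioi le_rfl) measurableSet_Ioi hg_int_Ioc hg_int_Ioi1]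
  have hgdiv : ∫ x in Ioi (0 : ℝ), g x
      = (∫ x in Ioi (0 : ℝ), deriv φ x * (x : ℂ) ^ s) / s := by
    rw [← integral_div]
    refine setIntegral_congr_fun measurableSet_Ioi fun x hx => ?_
    simp [hg_def, mul_div_assoc]
  have hF₁1 : F₁ 1 = (φ 1 - φ 0) / s := by simp [hF1_def, div_eq_mul_inv]
  have hF₂1 : F₂ 1 = φ 1 / s := by simp [hF2_def, div_eq_mul_inv]
  have hsum : (∫ x in Ioc (0 : ℝ) 1, g x) + ∫ x in Ioi (1 : ℝ), g x
      = (∫ x in Ioi (0 : ℝ), deriv φ x * (x : ℂ) ^ s) / s := by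
    rw [← hunion, hgdiv]
  rw [split1, split2, hF₁1, hF₂1]
  linear_combination -hsum

end MellinDecayAux

/-- for a Schwartz function `φ`, with `G₀(it)` the value at `s = it`
of the meromorphic continuation of its Mellin transform, `t·G₀(it) → 0` as
`|t| → ∞`. -/
theorem mellin_schwartz_imaginary_axis_decay (φ : SchwartzMap ℝ ℂ) :
    Tendsto
      (fun t : ℝ =>
        (t : ℂ) *
          ((∫ x in Ioc (0 : ℝ) 1, (φ x - φ 0) * (x : ℂ) ^ ((t : ℂ) * Complex.I - 1)) +
            φ 0 / ((t : ℂ) * Complex.I) +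
            ∫ x in Ioi (1 : ℝ), φ x * (x : ℂ) ^ ((t : ℂ) * Complex.I - 1)))
      (cocompact ℝ) (nhds 0) := by
  set g₀ : ℝ → ℂ := fun u => Real.exp (-1 * u) • deriv φ (Real.exp (-u)) with hg₀
  have hre : ∀ t : ℝ, ((1 : ℂ) + (t : ℂ) * Complex.I).re = 1 := by intro t; simp
  have him : ∀ t : ℝ, ((1 : ℂ) + (t : ℂ) * Complex.I).im = t := by intro t; simp
  have hmellin : ∀ t : ℝ, mellin (fun x => deriv φ x) (1 + (t : ℂ) * Complex.I)
      = ∫ x in Ioi (0 : ℝ), deriv φ x * (x : ℂ) ^ ((t : ℂ) * Complex.I) := by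
    intro t
    unfold mellin
    rw [show (1 : ℂ) + (t : ℂ) * Complex.I - 1 = (t : ℂ) * Complex.I by ring]
    refine setIntegral_congr_fun measurableSet_Ioi fun x hx => ?_
    simp [mul_comm]
  have hfour : ∀ t : ℝ, mellin (fun x => deriv φ x) (1 + (t : ℂ) * Complex.I)
      = 𝓕 g₀ (t / (2 * π)) := by
    intro t
    rw [mellin_eq_fourier, hre, him]
  have h2π : (0 : ℝ) < 2 * π := by positivity
  have hmap : Tendsto (fun t : ℝ => t / (2 * π)) (cocompact ℝ) (cocompact ℝ) := by
    rw [cocompact_eq_atBot_atTop]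
    refine tendsto_sup.2 ⟨?_, ?_⟩
    · exact (tendsto_id.atBot_div_const h2π).mono_right le_sup_left
    · exact (tendsto_id.atTop_div_const h2π).mono_right le_sup_right
  have h0 : Tendsto (fun t : ℝ => Complex.I * 𝓕 g₀ (t / (2 * π)))
      (cocompact ℝ) (nhds 0) := by
    have := ((Real.zero_at_infty_fourier g₀).comp hmap).const_mul Complex.I
    simpa using this
  refine h0.congr' ?_
  have hmem : ({(0 : ℝ)}ᶜ : Set ℝ) ∈ cocompact ℝ :=
    mem_cocompact.2 ⟨{0}, isCompact_singleton, subset_rfl⟩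
  filter_upwards [hmem] with t ht
  have htne : t ≠ 0 := ht
  rw [MellinDecayAux.ibp φ t htne, ← hmellin t, hfour t]
  have htc : (t : ℂ) ≠ 0 := Complex.ofReal_ne_zero.2 htne
  set Y := 𝓕 g₀ (t / (2 * π))
  field_simp
  linear_combination Y * Complex.I_sq
end

section
/- Let f : ℝ → ℂ be a Schwartz function and let c > 0. Then the function x ↦ e^{cx}·f(e^x) belongs to the Schwartz space 𝓢(ℝ,ℂ); i.e. for all n, k ∈ ℕ, sup_{x∈ℝ} |x^n · (d/dx)^k (e^{cx} f(e^x))| < ∞. -/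
open MeasureTheory Complex Set
open scoped ContDiff

/-- for a Schwartz function `f` and `c > 0`, the function
`x ↦ e^{cx}·f(e^x)` belongs to the Schwartz space `𝓢(ℝ,ℂ)`. -/
theorem exp_comp_schwartz (f : SchwartzMap ℝ ℂ) (c : ℝ) (hc : 0 < c) :
    ∃ g : SchwartzMap ℝ ℂ, ∀ x : ℝ,
      g x = Real.exp (c * x) • f (Real.exp x) := by
  classical
  set d : ℕ → ℝ → ℂ := fun j => iteratedDeriv j (⇑f) with hd
  have hdiff : ∀ j, Differentiable ℝ (d j) := by
    intro j
    exact f.smooth'.differentiable_iteratedDeriv j (by exact_mod_cast ENat.coe_lt_top j)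
  set H : ℕ → ℝ → ℂ := fun j x => Real.exp ((c + j) * x) • d j (Real.exp x) with hH
  have key : ∀ (j : ℕ) (x : ℝ),
      HasDerivAt (H j) ((c + j) • H j x + H (j + 1) x) x := by
    intro j x
    have hinner : HasDerivAt (fun y : ℝ => (c + j) * y) (c + j) x := by
      simpa using (hasDerivAt_id x).const_mul (c + j)
    have hexp : HasDerivAt (fun y : ℝ => Real.exp ((c + j) * y))
        (Real.exp ((c + j) * x) * (c + j)) x := hinner.exp
    have h1 : HasDerivAt (d j) (d (j + 1) (Real.exp x)) (Real.exp x) := by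
      have := ((hdiff j) (Real.exp x)).hasDerivAt
      rwa [show deriv (d j) (Real.exp x) = d (j + 1) (Real.exp x) by
        rw [hd]; simp [iteratedDeriv_succ]] at this
    have hcomp : HasDerivAt (fun y : ℝ => d j (Real.exp y))
        (Real.exp x • d (j + 1) (Real.exp x)) x := h1.scomp x (Real.hasDerivAt_exp x)
    have := hexp.smul hcomp
    convert this using 1
    case e'_4 => rfl
    case e'_8 => rfl
    rw [hH]
    simp only [smul_smul, ← Real.exp_add]
    rw [add_comm]
    congr 2
    · push_cast; ring
    · ring_nf
  -- the iterated derivatives of F are combinations of the H j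
  set F : ℝ → ℂ := fun x => Real.exp (c * x) • f (Real.exp x) with hF
  have hF0 : F = H 0 := by
    funext x
    rw [hF, hH, hd]
    simp [iteratedDeriv_zero]
  have formula : ∀ n : ℕ, ∃ a : ℕ → ℝ, (∀ j, n < j → a j = 0) ∧
      ∀ x, iteratedDeriv n F x = ∑ j ∈ Finset.range (n + 1), a j • H j x := by
    intro n
    induction n with
    | zero =>
      refine ⟨fun j => if j = 0 then 1 else 0, fun j hj => if_neg (by omega), fun x => ?_⟩
      simp [iteratedDeriv_zero, hF0]
    | succ n ih =>
      obtain ⟨a, ha0, hae⟩ := ih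
      refine ⟨fun j => (c + j) * a j + (if j = 0 then 0 else a (j - 1)), fun j hj => ?_, fun x => ?_⟩
      · show (c + (j : ℝ)) * a j + (if j = 0 then 0 else a (j - 1)) = 0
        have h1 : a j = 0 := ha0 j (by omega)
        have h2 : (if j = 0 then (0:ℝ) else a (j - 1)) = 0 := by
          rw [if_neg (by omega)]
          exact ha0 _ (by omega)
        rw [h1, h2]; ring
      · have hsum : HasDerivAt (fun y => ∑ j ∈ Finset.range (n + 1), a j • H j y)
            (∑ j ∈ Finset.range (n + 1), a j • ((c + j) • H j x + H (j + 1) x)) x :=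
          HasDerivAt.fun_sum fun j _ => (key j x).const_smul (a j)
        have hiter : iteratedDeriv n F = fun y => ∑ j ∈ Finset.range (n + 1), a j • H j y :=
          funext hae
        rw [iteratedDeriv_succ, hiter, hsum.deriv]
        have step1 : ∑ j ∈ Finset.range (n + 1), a j • ((c + j) • H j x + H (j + 1) x)
            = (∑ j ∈ Finset.range (n + 1), ((c + j) * a j) • H j x)
              + ∑ j ∈ Finset.range (n + 1), a j • H (j + 1) x := by
          rw [← Finset.sum_add_distrib]
          refine Finset.sum_congr rfl fun j _ => ?_
          rw [smul_add, smul_smul, mul_comm]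
        have step2 : ∑ j ∈ Finset.range (n + 1 + 1),
            ((c + j) * a j + (if j = 0 then 0 else a (j - 1))) • H j x
            = (∑ j ∈ Finset.range (n + 1 + 1), ((c + j) * a j) • H j x)
              + ∑ j ∈ Finset.range (n + 1 + 1), (if j = 0 then (0:ℝ) else a (j - 1)) • H j x := by
          rw [← Finset.sum_add_distrib]
          exact Finset.sum_congr rfl fun j _ => add_smul _ _ _
        rw [step1, step2]
        congr 1
        · rw [Finset.sum_range_succ (fun j => ((c + (j:ℝ)) * a j) • H j x) (n + 1),
            ha0 (n + 1) (by omega)]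
          simp
        · rw [Finset.sum_range_succ' (fun j => (if j = 0 then (0:ℝ) else a (j - 1)) • H j x)
            (n + 1)]
          simp
  -- decay of each H j
  have hHdecay : ∀ j k : ℕ, ∃ C : ℝ, 0 ≤ C ∧ ∀ x : ℝ, |x| ^ k * ‖H j x‖ ≤ C := by
    intro j k
    set M : ℕ := ⌈c⌉₊ + j + 1 with hM
    refine ⟨(k.factorial : ℝ) * SchwartzMap.seminorm ℝ M j f
        + (k.factorial / c ^ k) * SchwartzMap.seminorm ℝ 0 j f, by positivity, fun x => ?_⟩
    have hnorm : ‖H j x‖ = Real.exp ((c + j) * x) * ‖d j (Real.exp x)‖ := by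
      simp only [hH]
      rw [norm_smul, Real.norm_eq_abs, Real.abs_exp]
    have hd0 : ‖d j (Real.exp x)‖ ≤ SchwartzMap.seminorm ℝ 0 j f := by
      have := SchwartzMap.le_seminorm' ℝ 0 j f (Real.exp x)
      simpa [hd] using this
    have hdnn : (0:ℝ) ≤ ‖d j (Real.exp x)‖ := norm_nonneg _
    have hA : (0:ℝ) ≤ (k.factorial : ℝ) * SchwartzMap.seminorm ℝ M j f := by positivity
    have hB : (0:ℝ) ≤ (k.factorial / c ^ k) * SchwartzMap.seminorm ℝ 0 j f := by positivity
    rcases le_total x 0 with hx | hx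
    · have h1 : Real.exp ((c + j) * x) ≤ Real.exp (c * x) := by
        apply Real.exp_le_exp.mpr
        nlinarith [Nat.cast_nonneg (α := ℝ) j]
      have h2 : |x| ^ k * Real.exp (c * x) ≤ k.factorial / c ^ k := by
        have hax : |x| = -x := abs_of_nonpos hx
        have hp := Real.pow_div_factorial_le_exp (x := c * (-x)) (by nlinarith) k
        have hexppos : (0:ℝ) < Real.exp (c * (-x)) := Real.exp_pos _
        have hck : (0:ℝ) < c ^ k := pow_pos hc k
        have hfact : (c * (-x)) ^ k ≤ (k.factorial : ℝ) * Real.exp (c * (-x)) := by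
          rw [div_le_iff₀ (by positivity)] at hp
          linarith
        have hex : Real.exp (c * x) = (Real.exp (c * (-x)))⁻¹ := by
          rw [← Real.exp_neg]; ring_nf
        rw [hax, hex, mul_inv_le_iff₀ hexppos, div_mul_eq_mul_div, le_div_iff₀ hck]
        calc (-x) ^ k * c ^ k = (c * (-x)) ^ k := by rw [mul_pow]; ring
          _ ≤ (k.factorial : ℝ) * Real.exp (c * (-x)) := hfact
      have h3 : |x| ^ k * Real.exp ((c + j) * x) ≤ k.factorial / c ^ k :=
        le_trans (mul_le_mul_of_nonneg_left h1 (by positivity)) h2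
      have h4 := mul_le_mul h3 hd0 hdnn (by positivity)
      rw [hnorm, ← mul_assoc]
      linarith
    · have h1 : |x| ^ k ≤ (k.factorial : ℝ) * Real.exp x := by
        have hp := Real.pow_div_factorial_le_exp (x := x) hx k
        rw [div_le_iff₀ (by positivity)] at hp
        rw [_root_.abs_of_nonneg hx]
        linarith
      have h2 : Real.exp ((c + j) * x) ≤ Real.exp (((⌈c⌉₊ : ℝ) + j) * x) := by
        apply Real.exp_le_exp.mpr
        have := Nat.le_ceil c
        nlinarith
      have h3 : Real.exp x * Real.exp (((⌈c⌉₊ : ℝ) + j) * x) = Real.exp x ^ M := by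
        rw [← Real.exp_add, ← Real.exp_nat_mul]
        congr 1
        rw [hM]
        push_cast
        ring
      have h4 : Real.exp x ^ M * ‖d j (Real.exp x)‖ ≤ SchwartzMap.seminorm ℝ M j f := by
        have := SchwartzMap.le_seminorm' ℝ M j f (Real.exp x)
        simpa [hd, abs_of_pos (Real.exp_pos x)] using this
      have hEnn : (0:ℝ) ≤ Real.exp ((c + j) * x) := (Real.exp_pos _).le
      have step : |x| ^ k * Real.exp ((c + j) * x) ≤ (k.factorial : ℝ) * Real.exp x ^ M := by
        calc |x| ^ k * Real.exp ((c + j) * x)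
            ≤ ((k.factorial : ℝ) * Real.exp x) * Real.exp (((⌈c⌉₊ : ℝ) + j) * x) :=
              mul_le_mul h1 h2 hEnn (by positivity)
          _ = (k.factorial : ℝ) * (Real.exp x * Real.exp (((⌈c⌉₊ : ℝ) + j) * x)) := by ring
          _ = (k.factorial : ℝ) * Real.exp x ^ M := by rw [h3]
      have t1 : (|x| ^ k * Real.exp ((c + j) * x)) * ‖d j (Real.exp x)‖
          ≤ (k.factorial : ℝ) * (Real.exp x ^ M * ‖d j (Real.exp x)‖) := by
        rw [← mul_assoc]
        exact mul_le_mul_of_nonneg_right step hdnn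
      have t2 : (k.factorial : ℝ) * (Real.exp x ^ M * ‖d j (Real.exp x)‖)
          ≤ (k.factorial : ℝ) * SchwartzMap.seminorm ℝ M j f :=
        mul_le_mul_of_nonneg_left h4 (by positivity)
      rw [hnorm, ← mul_assoc]
      linarith
  -- smoothness
  have hs : ContDiff ℝ ∞ F := by
    have h1 : ContDiff ℝ ∞ (fun x : ℝ => Real.exp (c * x)) :=
      Real.contDiff_exp.comp (contDiff_const.mul contDiff_id)
    have h2 : ContDiff ℝ ∞ (fun x : ℝ => f (Real.exp x)) :=
      (f.smooth ⊤).comp Real.contDiff_exp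
    exact h1.smul h2
  -- decay of F
  have decayF : ∀ k n : ℕ, ∃ C : ℝ, ∀ x, ‖x‖ ^ k * ‖iteratedFDeriv ℝ n F x‖ ≤ C := by
    intro k n
    obtain ⟨a, ha0, hae⟩ := formula n
    choose C hC0 hC using fun j => hHdecay j k
    refine ⟨∑ j ∈ Finset.range (n + 1), |a j| * C j, fun x => ?_⟩
    rw [norm_iteratedFDeriv_eq_norm_iteratedDeriv, hae x, Real.norm_eq_abs]
    calc |x| ^ k * ‖∑ j ∈ Finset.range (n + 1), a j • H j x‖
        ≤ |x| ^ k * ∑ j ∈ Finset.range (n + 1), ‖a j • H j x‖ :=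
          mul_le_mul_of_nonneg_left (norm_sum_le _ _) (by positivity)
      _ = ∑ j ∈ Finset.range (n + 1), |a j| * (|x| ^ k * ‖H j x‖) := by
          rw [Finset.mul_sum]
          refine Finset.sum_congr rfl fun j _ => ?_
          rw [norm_smul, Real.norm_eq_abs]; ring
      _ ≤ ∑ j ∈ Finset.range (n + 1), |a j| * C j :=
          Finset.sum_le_sum fun j _ => mul_le_mul_of_nonneg_left (hC j x) (abs_nonneg _)
  exact ⟨⟨F, hs, decayF⟩, fun x => rfl⟩
end

section
/- (Mellin inversion formula) Let φ : ℝ → ℂ be a Schwartz function, c > 0 and x > 0. Then the integral ∫_ℝ M(φ)(c+it)·x^{−it} dt converges and φ(x) = (x^{−c}/(2π)) ∫_ℝ M(φ)(c+it) x^{−it} dt, where M(φ)(c+it) = ∫₀^∞ φ(u) u^{c+it−1} du. -/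
open MeasureTheory Complex Set
open Real Filter Asymptotics SchwartzMap
open scoped FourierTransform

namespace MellinSchwartzAux

/-- The function `u ↦ e^{-au} ψ(e^{-u})`. -/
noncomputable def E (a : ℝ) (ψ : SchwartzMap ℝ ℂ) : ℝ → ℂ :=
  fun u => Real.exp (-a * u) • ψ (Real.exp (-u))

lemma schwartz_isBigO_atTop (ψ : SchwartzMap ℝ ℂ) (n : ℕ) :
    (fun x : ℝ => ψ x) =O[atTop] fun x : ℝ => x ^ (-(n : ℝ)) := by
  obtain ⟨C, -, hC⟩ := ψ.decay n 0
  rw [isBigO_iff]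
  refine ⟨C, ?_⟩
  filter_upwards [eventually_ge_atTop (1 : ℝ)] with x hx
  have hx0 : (0 : ℝ) < x := lt_of_lt_of_le one_pos hx
  have h := hC x
  rw [norm_iteratedFDeriv_zero] at h
  rw [norm_of_nonneg (Real.rpow_nonneg hx0.le _), Real.rpow_neg hx0.le, Real.rpow_natCast]
  have h' : ‖ψ x‖ * x ^ n ≤ C := by
    rw [mul_comm]; simpa [norm_of_nonneg hx0.le] using h
  have hxp : (0:ℝ) < x ^ n := by positivity
  calc ‖ψ x‖ = ‖ψ x‖ * x ^ n * (x ^ n)⁻¹ := by field_simp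
    _ ≤ C * (x ^ n)⁻¹ := by gcongr

lemma schwartz_isBigO_zero (ψ : SchwartzMap ℝ ℂ) :
    (fun x : ℝ => ψ x) =O[nhdsWithin (0:ℝ) (Ioi 0)] fun x : ℝ => x ^ (-(0 : ℝ)) := by
  obtain ⟨C, -, hC⟩ := ψ.decay 0 0
  rw [isBigO_iff]
  refine ⟨C, Filter.Eventually.of_forall fun x => ?_⟩
  have h := hC x
  rw [norm_iteratedFDeriv_zero, pow_zero, one_mul] at h
  simpa [Real.rpow_zero] using h

lemma mellinConv (ψ : SchwartzMap ℝ ℂ) {a : ℝ} (ha : 0 < a) :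
    MellinConvergent (fun x => ψ x) (a : ℂ) := by
  refine mellinConvergent_of_isBigO_rpow (a := (⌈a⌉₊ + 1 : ℕ)) (b := 0)
    (ψ.continuous.locallyIntegrable.locallyIntegrableOn _)
    (schwartz_isBigO_atTop ψ _) ?_ (schwartz_isBigO_zero ψ) ?_
  · simp only [Complex.ofReal_re]
    calc a ≤ ⌈a⌉₊ := Nat.le_ceil a
      _ < (⌈a⌉₊ + 1 : ℕ) := by exact_mod_cast Nat.lt_succ_self _
  · simpa using ha

-- copies of private lemmas from Mathlib.Analysis.MellinInversion
theorem rexp_neg_deriv_aux :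
    ∀ x ∈ univ, HasDerivWithinAt (rexp ∘ Neg.neg) (-rexp (-x)) univ x :=
  fun x _ ↦ mul_neg_one (rexp (-x)) ▸
    ((Real.hasDerivAt_exp (-x)).comp x (hasDerivAt_neg x)).hasDerivWithinAt

theorem rexp_neg_image_aux : rexp ∘ Neg.neg '' univ = Ioi 0 := by
  rw [Set.image_comp, Set.image_univ_of_surjective neg_surjective, Set.image_univ, Real.range_exp]

theorem rexp_neg_injOn_aux : univ.InjOn (rexp ∘ Neg.neg) :=
  Real.exp_injective.injOn.comp neg_injective.injOn (univ.mapsTo_univ _)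

theorem cexp_cpow_aux (x : ℝ) (s : ℂ) :
    cexp (-(x:ℂ)) * cexp (-(x:ℂ)) ^ (s - 1) = cexp (-s * x) := by
  conv_lhs => rw [show cexp (-(x:ℂ)) * cexp (-(x:ℂ)) ^ (s - 1)
    = cexp (-(x:ℂ)) ^ (1:ℂ) * cexp (-(x:ℂ)) ^ (s - 1) by rw [cpow_one]]
  rw [← cpow_add _ _ (Complex.exp_ne_zero _), cpow_def_of_ne_zero (Complex.exp_ne_zero _),
    Complex.log_exp (by norm_num; exact pi_pos) (by simpa using pi_nonneg)]
  ring_nf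

lemma integrable_E (ψ : SchwartzMap ℝ ℂ) {a : ℝ} (ha : 0 < a) : Integrable (E a ψ) := by
  have hf : MellinConvergent (fun x => ψ x) (a : ℂ) := mellinConv ψ ha
  rw [MellinConvergent, ← rexp_neg_image_aux, integrableOn_image_iff_integrableOn_abs_deriv_smul
      MeasurableSet.univ rexp_neg_deriv_aux rexp_neg_injOn_aux] at hf
  replace hf : Integrable fun (x : ℝ) ↦ cexp (-(a:ℂ) * ↑x) • ψ (rexp (-x)) := by
    simpa [smul_smul, ← mul_assoc, cexp_cpow_aux] using hf
  refine hf.congr (Filter.Eventually.of_forall fun x => ?_)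
  show cexp (-(a:ℂ) * (x:ℂ)) • ψ (rexp (-x)) = E a ψ x
  have h1 : (-(a:ℂ) * (x:ℂ)) = ((-a * x : ℝ) : ℂ) := by push_cast; ring
  rw [h1, ← Complex.ofReal_exp, E]
  simp [Complex.real_smul, smul_eq_mul]

lemma hasDerivAt_E (ψ : SchwartzMap ℝ ℂ) (a : ℝ) (u : ℝ) :
    HasDerivAt (E a ψ)
      ((-a) • E a ψ u - E (a + 1) (SchwartzMap.derivCLM ℝ ℂ ψ) u) u := by
  have hr : HasDerivAt (fun u : ℝ => rexp (-u)) (-rexp (-u)) u := by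
    simpa [Function.comp_def] using (Real.hasDerivAt_exp (-u)).comp u (hasDerivAt_neg u)
  have h1 : HasDerivAt (fun u : ℝ => rexp (-a * u)) (-a * rexp (-a * u)) u := by
    have := (Real.hasDerivAt_exp (-a * u)).comp u ((hasDerivAt_id u).const_mul (-a))
    simpa [Function.comp_def, mul_comm] using this
  have h2 : HasDerivAt (fun u : ℝ => ψ (rexp (-u)))
      ((-rexp (-u)) • deriv (⇑ψ) (rexp (-u))) u :=
    (ψ.differentiableAt.hasDerivAt).scomp u hr
  have := h1.smul h2
  convert this using 1
  · rfl
  · rfl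
  rw [E, E, SchwartzMap.derivCLM_apply]
  simp only [smul_smul, smul_eq_mul, Complex.real_smul]
  push_cast
  rw [show (-((a:ℂ) + 1) * (u:ℂ)) = -(a:ℂ) * ↑u + -↑u by ring, Complex.exp_add]
  ring

lemma deriv_E (ψ : SchwartzMap ℝ ℂ) (a : ℝ) :
    deriv (E a ψ) = fun u =>
      (-a) • E a ψ u - E (a + 1) (SchwartzMap.derivCLM ℝ ℂ ψ) u :=
  funext fun u => (hasDerivAt_E ψ a u).deriv

lemma contDiff_E (ψ : SchwartzMap ℝ ℂ) (a : ℝ) (n : ℕ∞) : ContDiff ℝ n (E a ψ) := by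
  refine ContDiff.smul (f := fun u : ℝ => Real.exp (-a * u)) (g := fun u => ψ (Real.exp (-u))) ?_ ?_
  · exact Real.contDiff_exp.comp (contDiff_const.mul contDiff_id)
  · exact (ψ.smooth n).comp (Real.contDiff_exp.comp contDiff_neg)

lemma integrable_deriv_E (ψ : SchwartzMap ℝ ℂ) {a : ℝ} (ha : 0 < a) :
    Integrable (deriv (E a ψ)) := by
  rw [deriv_E]
  exact ((integrable_E ψ ha).smul (-a)).sub
    (integrable_E (SchwartzMap.derivCLM ℝ ℂ ψ) (by linarith))

lemma integrable_deriv2_E (ψ : SchwartzMap ℝ ℂ) {a : ℝ} (ha : 0 < a) :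
    Integrable (deriv (deriv (E a ψ))) := by
  rw [deriv_E]
  have hd : ∀ u : ℝ, HasDerivAt
      (fun u => (-a) • E a ψ u - E (a + 1) (SchwartzMap.derivCLM ℝ ℂ ψ) u)
      ((-a) • ((-a) • E a ψ u - E (a + 1) (SchwartzMap.derivCLM ℝ ℂ ψ) u)
        - ((-(a+1)) • E (a+1) (SchwartzMap.derivCLM ℝ ℂ ψ) u
            - E (a + 1 + 1) (SchwartzMap.derivCLM ℝ ℂ (SchwartzMap.derivCLM ℝ ℂ ψ)) u)) u :=
    fun u => ((hasDerivAt_E ψ a u).const_smul (-a)).sub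
      (hasDerivAt_E (SchwartzMap.derivCLM ℝ ℂ ψ) (a + 1) u)
  have : deriv (fun u => (-a) • E a ψ u - E (a + 1) (SchwartzMap.derivCLM ℝ ℂ ψ) u)
      = fun u => (-a) • ((-a) • E a ψ u - E (a + 1) (SchwartzMap.derivCLM ℝ ℂ ψ) u)
        - ((-(a+1)) • E (a+1) (SchwartzMap.derivCLM ℝ ℂ ψ) u
            - E (a + 1 + 1) (SchwartzMap.derivCLM ℝ ℂ (SchwartzMap.derivCLM ℝ ℂ ψ)) u) :=
    funext fun u => (hd u).deriv
  rw [this]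
  have h1 := integrable_E ψ ha
  have h2 := integrable_E (SchwartzMap.derivCLM ℝ ℂ ψ) (show (0:ℝ) < a + 1 by linarith)
  have h3 := integrable_E (SchwartzMap.derivCLM ℝ ℂ (SchwartzMap.derivCLM ℝ ℂ ψ))
    (show (0:ℝ) < a + 1 + 1 by linarith)
  exact (((h1.smul (-a)).sub h2).smul (-a)).sub ((h2.smul (-(a+1))).sub h3)

lemma integrable_iteratedDeriv_E (ψ : SchwartzMap ℝ ℂ) {a : ℝ} (ha : 0 < a)
    {n : ℕ} (hn : n ≤ 2) : Integrable (iteratedDeriv n (E a ψ)) := by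
  interval_cases n
  · simpa [iteratedDeriv_zero] using integrable_E ψ ha
  · simpa [iteratedDeriv_one] using integrable_deriv_E ψ ha
  · rw [show (2:ℕ) = 1 + 1 from rfl, iteratedDeriv_succ, iteratedDeriv_one]
    exact integrable_deriv2_E ψ ha

lemma integrable_fourier_E (ψ : SchwartzMap ℝ ℂ) {a : ℝ} (ha : 0 < a) :
    Integrable (𝓕 (E a ψ)) := by
  have key : 𝓕 (iteratedDeriv 2 (E a ψ))
      = fun (ξ : ℝ) => (2 * ↑π * Complex.I * ξ) ^ 2 • (𝓕 (E a ψ) ξ) :=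
    Real.fourier_iteratedDeriv (N := 2) (contDiff_E ψ a 2)
      (fun n hn => integrable_iteratedDeriv_E ψ ha (by exact_mod_cast hn)) le_rfl
  set C0 : ℝ := ∫ u, ‖E a ψ u‖ with hC0
  set C2 : ℝ := ∫ u, ‖iteratedDeriv 2 (E a ψ) u‖ with hC2
  have hb0 : ∀ ξ : ℝ, ‖𝓕 (E a ψ) ξ‖ ≤ C0 := fun ξ =>
    VectorFourier.norm_fourierIntegral_le_integral_norm _ _ _ _ _
  have hb2 : ∀ ξ : ℝ, (2 * π) ^ 2 * ξ ^ 2 * ‖𝓕 (E a ψ) ξ‖ ≤ C2 := by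
    intro ξ
    have h1 : ‖𝓕 (iteratedDeriv 2 (E a ψ)) ξ‖ ≤ C2 :=
      VectorFourier.norm_fourierIntegral_le_integral_norm _ _ _ _ _
    rw [key] at h1
    calc (2 * π) ^ 2 * ξ ^ 2 * ‖𝓕 (E a ψ) ξ‖
        = ‖(2 * ↑π * Complex.I * ξ) ^ 2 • (𝓕 (E a ψ) ξ)‖ := by
          rw [norm_smul, norm_pow]
          have hn : ‖2 * (π:ℂ) * Complex.I * (ξ:ℂ)‖ = 2 * π * |ξ| := by
            simp [_root_.abs_of_nonneg pi_nonneg]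
          rw [hn, mul_pow, mul_pow, _root_.sq_abs]
          ring
      _ ≤ C2 := h1
  have hcont : Continuous (𝓕 (E a ψ)) :=
    VectorFourier.fourierIntegral_continuous Real.continuous_fourierChar
      (by exact continuous_inner) (integrable_E ψ ha)
  have h2π : (0:ℝ) < (2 * π) ^ 2 := by positivity
  have hC0nn : 0 ≤ C0 := integral_nonneg fun u => norm_nonneg _
  have hC2nn : 0 ≤ C2 := integral_nonneg fun u => norm_nonneg _
  refine (integrable_inv_one_add_sq.const_mul (C0 + C2 / (2 * π) ^ 2)).mono'
    hcont.aestronglyMeasurable (Filter.Eventually.of_forall fun ξ => ?_)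
  have hpos : (0:ℝ) < 1 + ξ ^ 2 := by positivity
  have hMnn : 0 ≤ C0 + C2 / (2 * π) ^ 2 := by
    have : 0 ≤ C2 / (2 * π) ^ 2 := div_nonneg hC2nn h2π.le
    linarith
  rw [← div_eq_mul_inv, le_div_iff₀ hpos]
  have e2 : ξ ^ 2 * ‖𝓕 (E a ψ) ξ‖ ≤ C2 / (2 * π) ^ 2 := by
    rw [le_div_iff₀ h2π]
    nlinarith [hb2 ξ]
  nlinarith [hb0 ξ, norm_nonneg (𝓕 (E a ψ) ξ)]

lemma vertical_integrable (φ : SchwartzMap ℝ ℂ) {c : ℝ} (hc : 0 < c) :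
    Integrable (fun t : ℝ =>
      mellin (fun x => φ x) ((c : ℂ) + (t : ℂ) * Complex.I)) := by
  have hF := integrable_fourier_E φ hc
  have h2π : ((2 * π)⁻¹ : ℝ) ≠ 0 := inv_ne_zero (by positivity)
  have hcomp := hF.comp_mul_right' (R := (2 * π)⁻¹) h2π
  refine hcomp.congr (Filter.Eventually.of_forall fun t => ?_)
  show 𝓕 (E c φ) (t * (2 * π)⁻¹) = mellin (fun x => φ x) ((c : ℂ) + (t : ℂ) * Complex.I)
  rw [mellin_eq_fourier]
  have hre : ((c : ℂ) + (t : ℂ) * Complex.I).re = c := by simp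
  have him : ((c : ℂ) + (t : ℂ) * Complex.I).im = t := by simp
  rw [hre, him, div_eq_mul_inv]
  rfl

end MellinSchwartzAux

open MellinSchwartzAux


/-- Mellin inversion formula: for a Schwartz function `φ`, `c > 0`
and `x > 0`, the integral `∫_ℝ M(φ)(c+it)·x^{−it} dt` converges and
`φ(x) = (x^{−c}/(2π)) ∫_ℝ M(φ)(c+it) x^{−it} dt`. -/
theorem mellin_inversion_schwartz (φ : SchwartzMap ℝ ℂ) (c : ℝ) (hc : 0 < c)
    (x : ℝ) (hx : 0 < x) :
    Integrable
        (fun t : ℝ =>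
          (∫ u in Ioi (0 : ℝ), φ u * (u : ℂ) ^ ((c : ℂ) + (t : ℂ) * Complex.I - 1)) *
            (x : ℂ) ^ (-((t : ℂ) * Complex.I))) ∧
      φ x =
        ((x ^ (-c) / (2 * Real.pi) : ℝ) : ℂ) *
          ∫ t : ℝ,
            (∫ u in Ioi (0 : ℝ), φ u * (u : ℂ) ^ ((c : ℂ) + (t : ℂ) * Complex.I - 1)) *
              (x : ℂ) ^ (-((t : ℂ) * Complex.I)) := by
  have hMc : MellinConvergent (fun x => φ x) (c : ℂ) := mellinConv φ hc
  have hV := vertical_integrable φ hc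
  have hxC : (x : ℂ) ≠ 0 := by exact_mod_cast hx.ne'
  have hnorm : ∀ t : ℝ, ‖(x : ℂ) ^ (-((t : ℂ) * Complex.I))‖ ≤ 1 := by
    intro t
    rw [Complex.norm_cpow_eq_rpow_re_of_pos hx]
    simp
  have hmf : ∀ t : ℝ, (∫ u in Ioi (0 : ℝ), φ u * (u : ℂ) ^ ((c : ℂ) + (t : ℂ) * Complex.I - 1))
      = mellin (fun x => φ x) ((c : ℂ) + (t : ℂ) * Complex.I) := by
    intro t
    rw [mellin]
    simp_rw [smul_eq_mul, mul_comm]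
  have hcpow : Continuous fun t : ℝ => (x : ℂ) ^ (-((t : ℂ) * Complex.I)) :=
    Continuous.const_cpow (by continuity) (Or.inl hxC)
  have hInt : Integrable (fun t : ℝ =>
      (∫ u in Ioi (0 : ℝ), φ u * (u : ℂ) ^ ((c : ℂ) + (t : ℂ) * Complex.I - 1)) *
        (x : ℂ) ^ (-((t : ℂ) * Complex.I))) := by
    have h1 : Integrable (fun t : ℝ => (x : ℂ) ^ (-((t : ℂ) * Complex.I)) *
        mellin (fun x => φ x) ((c : ℂ) + (t : ℂ) * Complex.I)) :=
      hV.bdd_mul hcpow.aestronglyMeasurable (Filter.Eventually.of_forall hnorm)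
    refine h1.congr (Filter.Eventually.of_forall fun t => ?_)
    dsimp only
    rw [hmf t, mul_comm]
  refine ⟨hInt, ?_⟩
  have hinv : mellinInv c (mellin fun x => φ x) x = φ x :=
    mellinInv_mellin_eq c (fun x => φ x) hx hMc hV φ.continuous.continuousAt
  have hsplit : ∀ y : ℝ, (x : ℂ) ^ (-((c : ℂ) + (y : ℂ) * Complex.I)) •
        mellin (fun x => φ x) ((c : ℂ) + (y : ℂ) * Complex.I)
      = (x : ℂ) ^ (-(c : ℂ)) * (mellin (fun x => φ x) ((c : ℂ) + (y : ℂ) * Complex.I) *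
          (x : ℂ) ^ (-((y : ℂ) * Complex.I))) := by
    intro y
    rw [smul_eq_mul, show -((c : ℂ) + (y : ℂ) * Complex.I)
      = (-(c : ℂ)) + (-((y : ℂ) * Complex.I)) by ring, cpow_add _ _ hxC]
    ring
  have hL : mellinInv c (mellin (fun x => φ x)) x
      = ((x ^ (-c) / (2 * π) : ℝ) : ℂ) *
          ∫ t : ℝ, mellin (fun x => φ x) ((c : ℂ) + (t : ℂ) * Complex.I) *
            (x : ℂ) ^ (-((t : ℂ) * Complex.I)) := by
    rw [mellinInv]
    simp_rw [hsplit]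
    rw [integral_const_mul, Complex.real_smul]
    rw [show ((x ^ (-c) / (2 * π) : ℝ) : ℂ)
      = ((1 / (2 * π) : ℝ) : ℂ) * ((x ^ (-c) : ℝ) : ℂ) by push_cast; ring]
    rw [Complex.ofReal_cpow hx.le]
    push_cast
    ring
  simp_rw [hmf]
  rw [← hinv]
  exact hL
end

section
/- (Injectivity of the Mellin transform on S(ℝ⁺)) Let φ, ψ : ℝ → ℂ be Schwartz functions and suppose there exists c > 0 such that for every t ∈ ℝ, ∫₀^∞ φ(x) x^{c+it−1} dx = ∫₀^∞ ψ(x) x^{c+it−1} dx. Then φ(x) = ψ(x) for all x ≥ 0. -/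
open MeasureTheory Complex Set

lemma schwartz_mellinConvergent (f : SchwartzMap ℝ ℂ) {s : ℂ} (hs : 0 < s.re) :
    MellinConvergent (⇑f) s := by
  refine mellinConvergent_of_isBigO_rpow (a := s.re + 1) (b := 0)
    (f.continuous.locallyIntegrable.locallyIntegrableOn _) ?_ (by linarith) ?_ hs
  · have h1 : (⇑f) =O[Filter.cocompact ℝ] fun x => ‖x‖ ^ (-(s.re + 1)) :=
      f.isBigO_cocompact_rpow _
    have h2 := h1.mono (show Filter.atTop ≤ Filter.cocompact ℝ by
      rw [cocompact_eq_atBot_atTop]; exact le_sup_right)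
    refine h2.congr' (Filter.EventuallyEq.refl _ _) ?_
    filter_upwards [Filter.eventually_ge_atTop (0 : ℝ)] with x hx
    rw [Real.norm_of_nonneg hx]
  · simp only [neg_zero, Real.rpow_zero]
    exact (f.continuous.continuousAt.tendsto.mono_left nhdsWithin_le_nhds).isBigO_one ℝ

/-- injectivity of the Mellin transform on `S(ℝ⁺)`: if two
Schwartz functions have the same Mellin transform along some vertical line
`Re s = c > 0`, then they agree on `[0,∞)`. -/
theorem mellin_schwartz_injective (φ ψ : SchwartzMap ℝ ℂ) (c : ℝ) (hc : 0 < c)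
    (h : ∀ t : ℝ,
      (∫ x in Ioi (0 : ℝ), φ x * (x : ℂ) ^ ((c : ℂ) + (t : ℂ) * Complex.I - 1)) =
        ∫ x in Ioi (0 : ℝ), ψ x * (x : ℂ) ^ ((c : ℂ) + (t : ℂ) * Complex.I - 1)) :
    ∀ x : ℝ, 0 ≤ x → φ x = ψ x := by
  set F := φ - ψ with hFdef
  have hre : ∀ t : ℝ, (0 : ℝ) < ((c : ℂ) + t * I).re := by intro t; simp [hc]
  have hm : ∀ (g : SchwartzMap ℝ ℂ) (t : ℝ), mellin (⇑g) ((c : ℂ) + t * I)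
      = ∫ x in Ioi (0 : ℝ), g x * (x : ℂ) ^ ((c : ℂ) + (t : ℂ) * I - 1) := by
    intro g t
    unfold mellin
    congr 1
    ext x
    rw [smul_eq_mul, mul_comm]
  have h0 : ∀ t : ℝ, mellin (⇑F) ((c : ℂ) + t * I) = 0 := by
    intro t
    have hsub := hasMellin_sub (schwartz_mellinConvergent φ (hre t))
      (schwartz_mellinConvergent ψ (hre t))
    have hFeq : mellin (⇑F) ((c : ℂ) + t * I)
        = mellin (fun x => φ x - ψ x) ((c : ℂ) + t * I) := by
      congr 1
    rw [hFeq, hsub.2, hm, hm, h t, sub_self]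
  have hpos : ∀ x : ℝ, 0 < x → F x = 0 := by
    intro x hx
    have hvert : Complex.VerticalIntegrable (mellin (⇑F)) c := by
      refine (integrable_zero _ _ _).congr ?_
      filter_upwards with y
      exact (h0 y).symm
    have hinv := mellinInv_mellin_eq c (⇑F) hx
      (schwartz_mellinConvergent F (by simp [hc])) hvert F.continuous.continuousAt
    rw [mellinInv] at hinv
    simp only [h0, smul_zero, integral_zero] at hinv
    exact hinv.symm
  intro x hx
  rcases hx.lt_or_eq with hx' | hx'
  · have := hpos x hx'
    simpa [F, sub_eq_zero] using this
  · subst hx'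
    have h1 : Filter.Tendsto (⇑F) (nhdsWithin 0 (Ioi 0)) (nhds (F 0)) :=
      F.continuous.continuousAt.tendsto.mono_left nhdsWithin_le_nhds
    have h2 : Filter.Tendsto (⇑F) (nhdsWithin 0 (Ioi 0)) (nhds 0) := by
      refine Filter.Tendsto.congr' ?_ tendsto_const_nhds
      filter_upwards [self_mem_nhdsWithin] with y hy
      exact (hpos y hy).symm
    have hF0 : F 0 = 0 := tendsto_nhds_unique h1 h2
    simpa [F, sub_eq_zero] using hF0
end

section
/- (Parseval's relation in general dimension) Let f, g : ℝ → ℂ be Schwartz functions, let d be a positive real number and c ∈ (0,d). Then ∫₀^∞ ω^{d−1}·f(ω)·g(ω) dω = (1/(2π)) ∫_ℝ M(f)(d−c−iλ)·M(g)(c+iλ) dλ, where M(h)(s) = ∫₀^∞ h(ω) ω^{s−1} dω, and all integrals converge absolutely. -/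
open MeasureTheory Complex Set

open MeasureTheory Complex Set Real Filter Asymptotics SchwartzMap
open scoped FourierTransform

namespace MPS

noncomputable def Gm (σ : ℝ) (h : ℝ → ℂ) : ℝ → ℂ :=
  fun u => Real.exp (-σ * u) • h (Real.exp (-u))

lemma continuous_Gm (σ : ℝ) (h : SchwartzMap ℝ ℂ) : Continuous (Gm σ ⇑h) :=
  ((Real.continuous_exp.comp (continuous_const.mul continuous_id)).smul
    (h.continuous.comp (Real.continuous_exp.comp continuous_neg)))

lemma integrable_exp_neg_abs {ε : ℝ} (hε : 0 < ε) :
    Integrable (fun u : ℝ => Real.exp (-ε * |u|)) := by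
  have h1 : IntegrableOn (fun u : ℝ => Real.exp (-ε * |u|)) (Ioi 0) := by
    refine (exp_neg_integrableOn_Ioi 0 hε).congr_fun (fun u hu => ?_) measurableSet_Ioi
    rw [abs_of_pos hu]
  have h2 : IntegrableOn (fun u : ℝ => Real.exp (-ε * |u|)) (Iic 0) := by
    rw [← Measure.map_neg_eq_self (volume : Measure ℝ)]
    have m : MeasurableEmbedding fun x : ℝ => -x := (Homeomorph.neg ℝ).measurableEmbedding
    rw [m.integrableOn_map_iff]
    simp_rw [Function.comp_def, abs_neg, neg_preimage, neg_Iic, neg_zero]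
    exact Iff.mpr integrableOn_Ici_iff_integrableOn_Ioi h1
  rw [← integrableOn_univ, ← Iic_union_Ioi (a := (0:ℝ))]
  exact h2.union h1

lemma integrable_Gm {σ : ℝ} (hσ : 0 < σ) (h : SchwartzMap ℝ ℂ) : Integrable (Gm σ ⇑h) := by
  obtain ⟨C0, hC0pos, hC0⟩ := h.decay 0 0
  set n : ℕ := ⌊σ⌋₊ + 1 with hn
  have hσn : σ < n := by rw [hn]; push_cast; exact Nat.lt_floor_add_one σ
  obtain ⟨C, hCpos, hC⟩ := h.decay n 0
  set ε : ℝ := min σ (n - σ) with hε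
  have hεpos : 0 < ε := lt_min hσ (by linarith)
  refine ((integrable_exp_neg_abs hεpos).const_mul (C0 + C)).mono'
    (continuous_Gm σ h).aestronglyMeasurable (.of_forall fun u => ?_)
  have hnorm : ‖Gm σ (⇑h) u‖ = Real.exp (-σ * u) * ‖h (Real.exp (-u))‖ := by
    rw [Gm, norm_smul, Real.norm_eq_abs, Real.abs_exp]
  rcases le_or_gt 0 u with hu | hu
  · have h1 : ‖h (Real.exp (-u))‖ ≤ C0 := by
      simpa using hC0 (Real.exp (-u))
    have h2 : Real.exp (-σ * u) ≤ Real.exp (-ε * |u|) := by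
      apply Real.exp_le_exp.2
      rw [_root_.abs_of_nonneg hu]
      nlinarith [min_le_left σ (n - σ)]
    rw [hnorm]
    calc Real.exp (-σ * u) * ‖h (Real.exp (-u))‖ ≤ Real.exp (-ε * |u|) * C0 := by
          exact mul_le_mul h2 h1 (norm_nonneg _) (Real.exp_nonneg _)
      _ ≤ (C0 + C) * Real.exp (-ε * |u|) := by nlinarith [Real.exp_nonneg (-ε * |u|)]
  · have hx : ‖Real.exp (-u)‖ = Real.exp (-u) := by
      rw [Real.norm_eq_abs, Real.abs_exp]
    have h1 : ‖h (Real.exp (-u))‖ ≤ C * Real.exp (n * u) := by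
      have := hC (Real.exp (-u))
      rw [hx, norm_iteratedFDeriv_zero] at this
      have hpow : Real.exp (-u) ^ n = Real.exp (-(n * u)) := by
        rw [← Real.exp_nat_mul]; ring_nf
      rw [hpow] at this
      have hexp : (0:ℝ) < Real.exp (-(n * u)) := Real.exp_pos _
      rw [← le_div_iff₀' hexp] at this
      calc ‖h (Real.exp (-u))‖ ≤ C / Real.exp (-(n*u)) := this
        _ = C * Real.exp (n * u) := by rw [div_eq_mul_inv, ← Real.exp_neg, neg_neg]
    rw [hnorm]
    have h2 : Real.exp (-σ * u) * (C * Real.exp (n * u)) = C * Real.exp ((n - σ) * u) := by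
      rw [mul_left_comm, ← Real.exp_add]; ring_nf
    have h3 : Real.exp ((n - σ) * u) ≤ Real.exp (-ε * |u|) := by
      apply Real.exp_le_exp.2
      rw [abs_of_nonpos hu.le]
      nlinarith [min_le_right σ (n - σ)]
    calc Real.exp (-σ * u) * ‖h (Real.exp (-u))‖
        ≤ Real.exp (-σ * u) * (C * Real.exp (n * u)) := by
          exact mul_le_mul_of_nonneg_left h1 (Real.exp_nonneg _)
      _ = C * Real.exp ((n - σ) * u) := h2
      _ ≤ (C0 + C) * Real.exp (-ε * |u|) := by
          have := Real.exp_nonneg (-ε * |u|)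
          nlinarith [mul_le_mul_of_nonneg_left h3 hCpos.le]

lemma hasDerivAt_Gm (σ : ℝ) (h : SchwartzMap ℝ ℂ) (u : ℝ) :
    HasDerivAt (Gm σ ⇑h)
      ((-σ : ℝ) • Gm σ (⇑h) u - Gm (σ + 1) (⇑(SchwartzMap.derivCLM ℝ ℂ h)) u) u := by
  have h1 : HasDerivAt (fun u : ℝ => Real.exp (-σ * u)) (-σ * Real.exp (-σ * u)) u := by
    have := (Real.hasDerivAt_exp (-σ * u)).comp u ((hasDerivAt_id u).const_mul (-σ))
    have heq : (Real.exp ∘ fun u : ℝ => -σ * u) = fun u : ℝ => Real.exp (-σ * u) := rfl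
    rw [heq] at this
    simpa [mul_comm] using this
  have hinner : HasDerivAt (fun u : ℝ => Real.exp (-u)) (-Real.exp (-u)) u := by
    have := (Real.hasDerivAt_exp (-u)).comp u (hasDerivAt_neg u)
    simpa [Function.comp_def] using this
  have h2 : HasDerivAt (fun u : ℝ => h (Real.exp (-u)))
      ((-Real.exp (-u)) • deriv (⇑h) (Real.exp (-u))) u :=
    (h.differentiableAt.hasDerivAt).scomp u hinner
  have := h1.smul h2
  convert this using 1
  · rfl
  · rfl
  rw [Gm, Gm]
  simp only [SchwartzMap.derivCLM_apply, smul_smul]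
  rw [show Real.exp (-σ * u) * -Real.exp (-u) = -Real.exp (-(σ + 1) * u) by
    rw [mul_neg, ← Real.exp_add]; ring_nf]
  rw [neg_smul]
  abel

end MPS

namespace MPS
open scoped FourierTransform
open MeasureTheory Complex Set Real Filter

lemma contDiff_Gm (σ : ℝ) (h : SchwartzMap ℝ ℂ) : ContDiff ℝ 2 (Gm σ ⇑h) := by
  refine ContDiff.fun_smul (f := fun u : ℝ => Real.exp (-σ * u)) (g := fun u => h (Real.exp (-u))) ?_ ?_
  · exact (Real.contDiff_exp.comp (contDiff_const.mul contDiff_id)).of_le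
      le_top
  · exact (h.smooth'.comp (Real.contDiff_exp.comp contDiff_neg)).of_le
      (by
        rw [show ((2 : WithTop ℕ∞)) = ((2 : ℕ∞) : WithTop ℕ∞) by rfl, WithTop.coe_le_coe]
        exact le_top)

lemma deriv_Gm (σ : ℝ) (h : SchwartzMap ℝ ℂ) :
    deriv (Gm σ ⇑h) = fun u =>
      (-σ : ℝ) • Gm σ (⇑h) u - Gm (σ + 1) (⇑(SchwartzMap.derivCLM ℝ ℂ h)) u :=
  funext fun u => (hasDerivAt_Gm σ h u).deriv

lemma integrable_deriv_Gm {σ : ℝ} (hσ : 0 < σ) (h : SchwartzMap ℝ ℂ) :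
    Integrable (deriv (Gm σ ⇑h)) := by
  rw [deriv_Gm]
  exact ((integrable_Gm hσ h).smul (-σ : ℝ)).sub
    (integrable_Gm (by linarith) (SchwartzMap.derivCLM ℝ ℂ h))

lemma deriv2_Gm (σ : ℝ) (h : SchwartzMap ℝ ℂ) :
    deriv (deriv (Gm σ ⇑h)) = fun u =>
      (-σ : ℝ) • ((-σ : ℝ) • Gm σ (⇑h) u - Gm (σ + 1) (⇑(SchwartzMap.derivCLM ℝ ℂ h)) u)
      - ((-(σ + 1) : ℝ) • Gm (σ + 1) (⇑(SchwartzMap.derivCLM ℝ ℂ h)) u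
          - Gm (σ + 1 + 1) (⇑(SchwartzMap.derivCLM ℝ ℂ (SchwartzMap.derivCLM ℝ ℂ h))) u) := by
  rw [deriv_Gm]
  refine funext fun u => HasDerivAt.deriv ?_
  exact ((hasDerivAt_Gm σ h u).const_smul (-σ : ℝ)).sub
    (hasDerivAt_Gm (σ + 1) (SchwartzMap.derivCLM ℝ ℂ h) u)

lemma integrable_deriv2_Gm {σ : ℝ} (hσ : 0 < σ) (h : SchwartzMap ℝ ℂ) :
    Integrable (deriv (deriv (Gm σ ⇑h))) := by
  rw [deriv2_Gm]
  refine Integrable.sub ?_ ?_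
  · exact (((integrable_Gm hσ h).smul (-σ : ℝ)).sub
      (integrable_Gm (by linarith) (SchwartzMap.derivCLM ℝ ℂ h))).smul (-σ : ℝ)
  · exact ((integrable_Gm (by linarith) (SchwartzMap.derivCLM ℝ ℂ h)).smul (-(σ + 1) : ℝ)).sub
      (integrable_Gm (by linarith) (SchwartzMap.derivCLM ℝ ℂ (SchwartzMap.derivCLM ℝ ℂ h)))

lemma integrable_iteratedDeriv_Gm {σ : ℝ} (hσ : 0 < σ) (h : SchwartzMap ℝ ℂ) :
    ∀ n : ℕ, n ≤ (2 : ℕ∞) → Integrable (iteratedDeriv n (Gm σ ⇑h)) := by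
  intro n hn
  have hn' : n ≤ 2 := by exact_mod_cast hn
  interval_cases n
  · simpa [iteratedDeriv_zero] using integrable_Gm hσ h
  · simpa [iteratedDeriv_one] using integrable_deriv_Gm hσ h
  · rw [show (2:ℕ) = 1 + 1 from rfl, iteratedDeriv_succ, iteratedDeriv_one]
    exact integrable_deriv2_Gm hσ h

lemma integrable_fourier_Gm {σ : ℝ} (hσ : 0 < σ) (h : SchwartzMap ℝ ℂ) :
    Integrable (𝓕 (Gm σ ⇑h)) := by
  set G := Gm σ ⇑h with hG
  have hGint : Integrable G := integrable_Gm hσ h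
  have key := Real.fourier_iteratedDeriv (f := G) (N := (2:ℕ∞)) (n := 2)
    (contDiff_Gm σ h) (integrable_iteratedDeriv_Gm hσ h) le_rfl
  set A : ℝ := ∫ u, ‖G u‖ with hA
  set B : ℝ := (∫ u, ‖iteratedDeriv 2 G u‖) / (4 * π ^ 2) with hB
  have hbound : ∀ x : ℝ, ‖𝓕 G x‖ ≤ (A + B) * (1 + x ^ 2)⁻¹ := by
    intro x
    have h1 : ‖𝓕 G x‖ ≤ A :=
      VectorFourier.norm_fourierIntegral_le_integral_norm _ _ _ G x
    have h2 : x ^ 2 * ‖𝓕 G x‖ ≤ B := by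
      have e1 : ‖𝓕 (iteratedDeriv 2 G) x‖ = 4 * π ^ 2 * x ^ 2 * ‖𝓕 G x‖ := by
        rw [key]
        simp only [norm_smul, norm_pow, norm_mul, Complex.norm_real, Complex.norm_I,
          Complex.norm_ofNat, mul_one, Real.norm_eq_abs, abs_of_pos Real.pi_pos]
        rw [show (2 * π * |x|) ^ 2 = 4 * π ^ 2 * x ^ 2 by
          rw [mul_pow, mul_pow, _root_.sq_abs]; ring]
      have h3 : ‖𝓕 (iteratedDeriv 2 G) x‖ ≤ ∫ u, ‖iteratedDeriv 2 G u‖ :=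
        VectorFourier.norm_fourierIntegral_le_integral_norm _ _ _ _ x
      rw [e1] at h3
      rw [hB, le_div_iff₀ (by positivity)]
      nlinarith [Real.pi_pos]
    have hx : (0:ℝ) < 1 + x ^ 2 := by positivity
    rw [← div_eq_mul_inv, le_div_iff₀ hx]
    nlinarith [norm_nonneg (𝓕 G x)]
  refine (integrable_inv_one_add_sq.const_mul (A + B)).mono'
    ?_ (.of_forall hbound)
  exact (VectorFourier.fourierIntegral_continuous Real.continuous_fourierChar
    (by exact continuous_inner) hGint).aestronglyMeasurable

lemma continuous_fourier_Gm {σ : ℝ} (hσ : 0 < σ) (h : SchwartzMap ℝ ℂ) :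
    Continuous (𝓕 (Gm σ ⇑h)) :=
  VectorFourier.fourierIntegral_continuous Real.continuous_fourierChar
    (by exact continuous_inner) (integrable_Gm hσ h)

lemma mellin_eq_Gm (h : SchwartzMap ℝ ℂ) (σ y : ℝ) :
    mellin (⇑h) ((σ : ℂ) + (y : ℂ) * I) = 𝓕 (Gm σ ⇑h) (y / (2 * π)) := by
  rw [mellin_eq_fourier]
  have hre : ((σ : ℂ) + (y : ℂ) * I).re = σ := by simp
  have him : ((σ : ℂ) + (y : ℂ) * I).im = y := by simp
  rw [hre, him]
  rfl

lemma verticalIntegrable_mellin {σ : ℝ} (hσ : 0 < σ) (h : SchwartzMap ℝ ℂ) :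
    Complex.VerticalIntegrable (mellin ⇑h) σ := by
  have he : (fun y : ℝ => mellin (⇑h) ((σ:ℂ) + (y:ℂ) * I))
      = fun y => 𝓕 (Gm σ ⇑h) (y / (2 * π)) := funext fun y => mellin_eq_Gm h σ y
  rw [Complex.VerticalIntegrable, he]
  exact (integrable_fourier_Gm hσ h).comp_div
    (mul_ne_zero two_ne_zero Real.pi_ne_zero)

lemma continuous_mellin_vert {σ : ℝ} (hσ : 0 < σ) (h : SchwartzMap ℝ ℂ) :
    Continuous (fun l : ℝ => mellin (⇑h) ((σ:ℂ) + (l:ℂ) * I)) := by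
  have he : (fun l : ℝ => mellin (⇑h) ((σ:ℂ) + (l:ℂ) * I))
      = fun l => 𝓕 (Gm σ ⇑h) (l / (2 * π)) := funext fun y => mellin_eq_Gm h σ y
  rw [he]
  exact (continuous_fourier_Gm hσ h).comp (continuous_id.div_const _)

lemma schwartz_isBigO_atTop (h : SchwartzMap ℝ ℂ) (a : ℝ) :
    (⇑h) =O[atTop] fun x : ℝ => x ^ (-a) := by
  have h1 : (⇑h) =O[Filter.cocompact ℝ] fun x => ‖x‖ ^ (-a) := h.isBigO_cocompact_rpow (-a)
  have h2 : (⇑h) =O[atTop] fun x => ‖x‖ ^ (-a) :=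
    h1.mono (by rw [cocompact_eq_atBot_atTop]; exact le_sup_right)
  refine h2.congr' (EventuallyEq.refl _ _) ?_
  filter_upwards [eventually_gt_atTop (0:ℝ)] with x hx
  rw [Real.norm_eq_abs, abs_of_pos hx]

lemma schwartz_isBigO_zero (h : SchwartzMap ℝ ℂ) :
    (⇑h) =O[nhdsWithin (0:ℝ) (Ioi 0)] fun x : ℝ => x ^ (-(0:ℝ)) := by
  have he : (fun x : ℝ => x ^ (-(0:ℝ))) = fun _ : ℝ => (1:ℝ) := by
    funext x; rw [neg_zero, Real.rpow_zero]
  rw [he]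
  exact ((h.continuous.tendsto 0).mono_left nhdsWithin_le_nhds).isBigO_one ℝ

lemma mellinConvergent_schwartz (h : SchwartzMap ℝ ℂ) {s : ℂ} (hs : 0 < s.re) :
    MellinConvergent (⇑h) s :=
  mellinConvergent_of_isBigO_rpow
    (h.continuous.locallyIntegrable.locallyIntegrableOn _)
    (schwartz_isBigO_atTop h (s.re + 1)) (by linarith) (schwartz_isBigO_zero h) hs

lemma integrableOn_schwartz_cpow (h : SchwartzMap ℝ ℂ) {s : ℂ} (hs : 0 < s.re) :
    IntegrableOn (fun ω : ℝ => h ω * (ω : ℂ) ^ (s - 1)) (Ioi 0) := by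
  refine (mellinConvergent_schwartz h hs).congr_fun (fun t ht => ?_) measurableSet_Ioi
  dsimp only; rw [smul_eq_mul, mul_comm]

lemma norm_mellin_le (h : SchwartzMap ℝ ℂ) (s : ℂ) :
    ‖mellin (⇑h) s‖ ≤ ∫ ω in Ioi (0:ℝ), ω ^ (s.re - 1) * ‖h ω‖ := by
  rw [mellin]
  refine (norm_integral_le_integral_norm _).trans (le_of_eq ?_)
  refine setIntegral_congr_fun measurableSet_Ioi fun t ht => ?_
  rw [norm_smul, Complex.norm_cpow_eq_rpow_re_of_pos ht]
  simp

lemma key_inversion (f : SchwartzMap ℝ ℂ) {σ : ℝ} (hσ : 0 < σ) {ω : ℝ} (hω : 0 < ω) :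
    ∫ l : ℝ, mellin (⇑f) ((σ:ℂ) + ((-l : ℝ):ℂ) * I) * (ω:ℂ) ^ ((l:ℂ) * I)
      = ((2 * π : ℝ) : ℂ) * (ω:ℂ) ^ ((σ:ℝ) : ℂ) * f ω := by
  have h2π : (2 * π : ℝ) ≠ 0 := mul_ne_zero two_ne_zero Real.pi_ne_zero
  have hωC : (ω : ℂ) ≠ 0 := Complex.ofReal_ne_zero.mpr hω.ne'
  have hinv := mellinInv_mellin_eq σ (⇑f) hω
    (mellinConvergent_schwartz f (by simpa using hσ)) (verticalIntegrable_mellin hσ f)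
    f.continuous.continuousAt
  rw [mellinInv] at hinv
  set J : ℂ := ∫ y : ℝ, (ω:ℂ) ^ (-((σ:ℂ) + (y:ℂ) * I)) • mellin (⇑f) ((σ:ℂ) + (y:ℂ) * I)
    with hJdef
  have hJ : J = ((2 * π : ℝ) : ℂ) * f ω := by
    have : ((2 * π : ℝ) : ℂ) * ((1 / (2 * π) : ℝ) • J) = ((2 * π : ℝ):ℂ) * f ω := by
      rw [hinv]
    rwa [Complex.real_smul, ← mul_assoc, ← Complex.ofReal_mul,
      mul_one_div, div_self h2π, Complex.ofReal_one, one_mul] at this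
  have hneg : ∫ l : ℝ, (ω:ℂ) ^ (-((σ:ℂ) + ((-l:ℝ):ℂ) * I)) •
      mellin (⇑f) ((σ:ℂ) + ((-l:ℝ):ℂ) * I) = J := by
    rw [hJdef]
    exact integral_neg_eq_self (fun y : ℝ => (ω:ℂ) ^ (-((σ:ℂ) + (y:ℂ) * I)) •
      mellin (⇑f) ((σ:ℂ) + (y:ℂ) * I)) volume
  set T : ℂ := ∫ l : ℝ, mellin (⇑f) ((σ:ℂ) + ((-l : ℝ):ℂ) * I) * (ω:ℂ) ^ ((l:ℂ) * I)
    with hTdef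
  have hmul : (ω:ℂ) ^ (-(σ:ℂ)) * T = J := by
    rw [hTdef, ← integral_const_mul, ← hneg]
    refine integral_congr_ae (Filter.Eventually.of_forall fun l => ?_)
    have hsplit : (ω:ℂ) ^ (-((σ:ℂ) + ((-l:ℝ):ℂ) * I))
        = (ω:ℂ) ^ (-(σ:ℂ)) * (ω:ℂ) ^ ((l:ℂ) * I) := by
      rw [← Complex.cpow_add _ _ hωC]
      congr 1
      push_cast
      ring
    simp only [smul_eq_mul, hsplit]
    ring
  have hcancel : (ω:ℂ) ^ ((σ:ℝ):ℂ) * ((ω:ℂ) ^ (-(σ:ℂ)) * T) = (ω:ℂ) ^ ((σ:ℝ):ℂ) * J := by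
    rw [hmul]
  rw [← mul_assoc, ← Complex.cpow_add _ _ hωC, add_neg_cancel, Complex.cpow_zero,
    one_mul] at hcancel
  rw [hcancel, hJ]
  ring

end MPS

open MPS

/-- Parseval's relation in general dimension: for Schwartz
functions `f, g`, `d > 0` and `c ∈ (0,d)`,
`∫₀^∞ ω^{d−1}·f(ω)·g(ω) dω = (1/(2π)) ∫_ℝ M(f)(d−c−iλ)·M(g)(c+iλ) dλ`,
all integrals converging absolutely. -/
theorem mellin_parseval_schwartz_general_dim (f g : SchwartzMap ℝ ℂ) (d c : ℝ)
    (hd : 0 < d) (hc0 : 0 < c) (hcd : c < d) :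
    let M : (ℝ → ℂ) → ℂ → ℂ := fun h s => ∫ ω in Ioi (0 : ℝ), h ω * (ω : ℂ) ^ (s - 1)
    IntegrableOn (fun ω : ℝ => ((ω ^ (d - 1) : ℝ) : ℂ) * f ω * g ω) (Ioi 0) ∧
      (∀ l : ℝ, IntegrableOn
          (fun ω : ℝ => f ω * (ω : ℂ) ^ ((d : ℂ) - c - (l : ℂ) * Complex.I - 1)) (Ioi 0)) ∧
      (∀ l : ℝ, IntegrableOn
          (fun ω : ℝ => g ω * (ω : ℂ) ^ ((c : ℂ) + (l : ℂ) * Complex.I - 1)) (Ioi 0)) ∧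
      Integrable
        (fun l : ℝ =>
          M f ((d : ℂ) - c - (l : ℂ) * Complex.I) * M g ((c : ℂ) + (l : ℂ) * Complex.I)) ∧
      (∫ ω in Ioi (0 : ℝ), ((ω ^ (d - 1) : ℝ) : ℂ) * f ω * g ω) =
        ((1 / (2 * Real.pi) : ℝ) : ℂ) *
          ∫ l : ℝ,
            M f ((d : ℂ) - c - (l : ℂ) * Complex.I) * M g ((c : ℂ) + (l : ℂ) * Complex.I) := by
  intro M
  have hdc : 0 < d - c := by linarith
  have hM : ∀ (h : SchwartzMap ℝ ℂ) (s : ℂ), M (⇑h) s = mellin (⇑h) s := by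
    intro h s
    show (∫ ω in Ioi (0:ℝ), h ω * (ω : ℂ) ^ (s - 1)) = mellin (⇑h) s
    rw [mellin]
    exact setIntegral_congr_fun measurableSet_Ioi fun t ht => by rw [smul_eq_mul, mul_comm]
  have hsf : ∀ l : ℝ, (d : ℂ) - c - (l : ℂ) * Complex.I
      = ((d - c : ℝ) : ℂ) + ((-l : ℝ) : ℂ) * Complex.I := by
    intro l; push_cast; ring
  -- claim 2
  have claim2 : ∀ l : ℝ, IntegrableOn
      (fun ω : ℝ => f ω * (ω : ℂ) ^ ((d : ℂ) - c - (l : ℂ) * Complex.I - 1)) (Ioi 0) := by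
    intro l
    refine integrableOn_schwartz_cpow f (s := (d : ℂ) - c - (l : ℂ) * Complex.I) ?_
    simp only [Complex.sub_re, Complex.ofReal_re, Complex.mul_re, Complex.ofReal_im,
      Complex.I_re, Complex.I_im, mul_zero, mul_one, zero_mul, sub_zero]
    simpa using hdc
  -- claim 3
  have claim3 : ∀ l : ℝ, IntegrableOn
      (fun ω : ℝ => g ω * (ω : ℂ) ^ ((c : ℂ) + (l : ℂ) * Complex.I - 1)) (Ioi 0) := by
    intro l
    refine integrableOn_schwartz_cpow g (s := (c : ℂ) + (l : ℂ) * Complex.I) ?_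
    simp only [Complex.add_re, Complex.ofReal_re, Complex.mul_re, Complex.ofReal_im,
      Complex.I_re, Complex.I_im, mul_zero, mul_one, zero_mul, sub_zero]
    simpa using hc0
  -- claim 1
  have claim1 : IntegrableOn (fun ω : ℝ => ((ω ^ (d - 1) : ℝ) : ℂ) * f ω * g ω) (Ioi 0) := by
    obtain ⟨C0, hC0pos, hC0⟩ := g.decay 0 0
    simp only [pow_zero, one_mul, norm_iteratedFDeriv_zero] at hC0
    have base : IntegrableOn (fun ω : ℝ => f ω * (ω : ℂ) ^ ((d : ℂ) - 1)) (Ioi 0) :=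
      integrableOn_schwartz_cpow f (s := (d : ℂ)) (by simpa using hd)
    have hcont : ContinuousOn (fun ω : ℝ => ((ω ^ (d - 1) : ℝ) : ℂ) * f ω * g ω) (Ioi 0) := by
      refine ContinuousOn.mul (ContinuousOn.mul ?_ f.continuous.continuousOn)
        g.continuous.continuousOn
      exact Complex.continuous_ofReal.comp_continuousOn
        (continuousOn_of_forall_continuousAt fun x hx =>
          Real.continuousAt_rpow_const x _ (Or.inl (ne_of_gt hx)))
    refine (base.norm.const_mul C0).mono' (hcont.aestronglyMeasurable measurableSet_Ioi) ?_
    filter_upwards [ae_restrict_mem measurableSet_Ioi] with ω hω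
    have hωpos : (0:ℝ) < ω := hω
    have e1 : ‖((ω ^ (d - 1) : ℝ) : ℂ) * f ω * g ω‖ = ω ^ (d - 1) * ‖f ω‖ * ‖g ω‖ := by
      rw [norm_mul, norm_mul, Complex.norm_real, Real.norm_eq_abs,
        abs_of_pos (Real.rpow_pos_of_pos hωpos _)]
    have e2 : ‖f ω * (ω : ℂ) ^ ((d : ℂ) - 1)‖ = ‖f ω‖ * ω ^ (d - 1) := by
      rw [norm_mul,
        Complex.norm_cpow_eq_rpow_re_of_pos hωpos]
      simp
    rw [e1, e2]
    have hmn : (0:ℝ) ≤ ω ^ (d - 1) * ‖f ω‖ :=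
      mul_nonneg (Real.rpow_nonneg hωpos.le (d - 1)) (norm_nonneg (f ω))
    calc ω ^ (d - 1) * ‖f ω‖ * ‖g ω‖ ≤ ω ^ (d - 1) * ‖f ω‖ * C0 :=
          mul_le_mul_of_nonneg_left (hC0 ω) hmn
      _ = C0 * (‖f ω‖ * ω ^ (d - 1)) := by ring
  -- claim 4
  have vertf : Integrable (fun l : ℝ => mellin (⇑f) (((d - c : ℝ):ℂ) + ((-l : ℝ):ℂ) * Complex.I)) :=
    (verticalIntegrable_mellin hdc f).comp_neg
  have contf : Continuous (fun l : ℝ =>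
      mellin (⇑f) (((d - c : ℝ):ℂ) + ((-l : ℝ):ℂ) * Complex.I)) :=
    (continuous_mellin_vert hdc f).comp continuous_neg
  have contg : Continuous (fun l : ℝ => mellin (⇑g) ((c:ℂ) + (l:ℂ) * Complex.I)) :=
    continuous_mellin_vert hc0 g
  have vertg : Integrable (fun l : ℝ => mellin (⇑g) ((c:ℂ) + (l:ℂ) * Complex.I)) :=
    verticalIntegrable_mellin hc0 g
  set A : ℝ := ∫ ω in Ioi (0:ℝ), ω ^ (d - c - 1) * ‖f ω‖ with hA
  have hmf_bound : ∀ l : ℝ,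
      ‖mellin (⇑f) (((d - c : ℝ):ℂ) + ((-l : ℝ):ℂ) * Complex.I)‖ ≤ A := by
    intro l
    have := norm_mellin_le f (((d - c : ℝ):ℂ) + ((-l : ℝ):ℂ) * Complex.I)
    have hre : (((d - c : ℝ):ℂ) + ((-l : ℝ):ℂ) * Complex.I).re = d - c := by simp
    rwa [hre] at this
  have claim4 : Integrable (fun l : ℝ =>
      M (⇑f) ((d : ℂ) - c - (l : ℂ) * Complex.I) * M (⇑g) ((c : ℂ) + (l : ℂ) * Complex.I)) := by
    have he : (fun l : ℝ =>
        M (⇑f) ((d : ℂ) - c - (l : ℂ) * Complex.I) * M (⇑g) ((c : ℂ) + (l : ℂ) * Complex.I))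
        = fun l : ℝ => mellin (⇑f) (((d - c : ℝ):ℂ) + ((-l : ℝ):ℂ) * Complex.I) *
            mellin (⇑g) ((c:ℂ) + (l:ℂ) * Complex.I) := by
      funext l
      rw [hM, hM, hsf]
    rw [he]
    refine (vertg.norm.const_mul A).mono' (contf.mul contg).aestronglyMeasurable ?_
    refine Filter.Eventually.of_forall fun l => ?_
    rw [norm_mul]
    exact mul_le_mul_of_nonneg_right (hmf_bound l) (norm_nonneg _)
  refine ⟨claim1, claim2, claim3, claim4, ?_⟩
  have h2πne : (2 * Real.pi : ℝ) ≠ 0 := mul_ne_zero two_ne_zero Real.pi_ne_zero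
  -- Fubini integrability
  have F2int : IntegrableOn (fun ω : ℝ => g ω * (ω : ℂ) ^ ((c:ℂ) - 1)) (Ioi 0) :=
    integrableOn_schwartz_cpow g (s := (c:ℂ)) (by simpa using hc0)
  have hmeq : (volume : Measure ℝ).prod (volume.restrict (Ioi (0:ℝ)))
      = ((volume : Measure ℝ).prod (volume : Measure ℝ)).restrict (univ ×ˢ Ioi 0) := by
    rw [← Measure.prod_restrict]
    congr 1
    exact Measure.restrict_univ.symm
  have hcontK : ContinuousOn (Function.uncurry fun (l : ℝ) (ω : ℝ) =>
      mellin (⇑f) (((d - c : ℝ):ℂ) + ((-l : ℝ):ℂ) * Complex.I) *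
        (g ω * (ω:ℂ) ^ ((c:ℂ) + (l:ℂ) * Complex.I - 1))) (univ ×ˢ Ioi 0) := by
    refine ContinuousOn.mul (contf.comp continuous_fst).continuousOn ?_
    refine ContinuousOn.mul (g.continuous.comp continuous_snd).continuousOn ?_
    intro p hp
    apply ContinuousAt.continuousWithinAt
    have hp2 : (0:ℝ) < p.2 := hp.2
    have hq : Continuous (fun q : ℝ × ℝ => (((q.2 : ℝ) : ℂ), (c:ℂ) + (q.1:ℂ) * Complex.I - 1)) := by
      refine Continuous.prodMk (Complex.continuous_ofReal.comp continuous_snd) ?_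
      fun_prop
    have hcp : ContinuousAt (fun x : ℂ × ℂ => x.1 ^ x.2)
        (((p.2 : ℝ) : ℂ), (c:ℂ) + (p.1:ℂ) * Complex.I - 1) :=
      continuousAt_cpow (Complex.mem_slitPlane_iff.mpr (Or.inl (by simpa using hp2)))
    exact (show ContinuousAt ((fun x : ℂ × ℂ => x.1 ^ x.2) ∘
      (fun q : ℝ × ℝ => (((q.2 : ℝ) : ℂ), (c:ℂ) + (q.1:ℂ) * Complex.I - 1))) p from
      ContinuousAt.comp (x := p) (g := fun x : ℂ × ℂ => x.1 ^ x.2)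
        (f := fun q : ℝ × ℝ => (((q.2 : ℝ) : ℂ), (c:ℂ) + (q.1:ℂ) * Complex.I - 1))
        hcp hq.continuousAt)
  have hKint : Integrable (Function.uncurry fun (l : ℝ) (ω : ℝ) =>
      mellin (⇑f) (((d - c : ℝ):ℂ) + ((-l : ℝ):ℂ) * Complex.I) *
        (g ω * (ω:ℂ) ^ ((c:ℂ) + (l:ℂ) * Complex.I - 1)))
      (volume.prod (volume.restrict (Ioi 0))) := by
    refine Integrable.mono' (vertf.norm.mul_prod F2int.norm) ?_ ?_
    · rw [hmeq]
      exact hcontK.aestronglyMeasurable (MeasurableSet.univ.prod measurableSet_Ioi)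
    · rw [hmeq]
      filter_upwards [ae_restrict_mem (MeasurableSet.univ.prod measurableSet_Ioi)] with p hp
      have hp2 : (0:ℝ) < p.2 := hp.2
      have hrecl : ((c:ℂ) + (p.1:ℂ) * Complex.I - 1).re = c - 1 := by simp
      have hrec : ((c:ℂ) - 1).re = c - 1 := by simp
      have e1 : ‖(p.2:ℂ) ^ ((c:ℂ) + (p.1:ℂ) * Complex.I - 1)‖ = p.2 ^ (c - 1) := by
        rw [Complex.norm_cpow_eq_rpow_re_of_pos hp2, hrecl]
      have e2 : ‖(p.2:ℂ) ^ ((c:ℂ) - 1)‖ = p.2 ^ (c - 1) := by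
        rw [Complex.norm_cpow_eq_rpow_re_of_pos hp2, hrec]
      refine le_of_eq ?_
      simp only [Function.uncurry, norm_mul, e1, e2]
  have hω_inner : ∀ ω ∈ Ioi (0:ℝ),
      (∫ l : ℝ, mellin (⇑f) (((d - c : ℝ):ℂ) + ((-l : ℝ):ℂ) * Complex.I) *
          (g ω * (ω:ℂ) ^ ((c:ℂ) + (l:ℂ) * Complex.I - 1)))
        = ((2 * Real.pi : ℝ):ℂ) * (((ω ^ (d - 1) : ℝ):ℂ) * f ω * g ω) := by
    intro ω hω
    have hωpos : (0:ℝ) < ω := hω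
    have hωC : (ω:ℂ) ≠ 0 := Complex.ofReal_ne_zero.mpr hωpos.ne'
    have e1 : (fun l : ℝ => mellin (⇑f) (((d - c : ℝ):ℂ) + ((-l : ℝ):ℂ) * Complex.I) *
        (g ω * (ω:ℂ) ^ ((c:ℂ) + (l:ℂ) * Complex.I - 1)))
        = fun l : ℝ => (g ω * (ω:ℂ) ^ ((c:ℂ) - 1)) *
            (mellin (⇑f) (((d - c : ℝ):ℂ) + ((-l : ℝ):ℂ) * Complex.I) *
              (ω:ℂ) ^ ((l:ℂ) * Complex.I)) := by
      funext l
      have hsplit : (ω:ℂ) ^ ((c:ℂ) + (l:ℂ) * Complex.I - 1)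
          = (ω:ℂ) ^ ((c:ℂ) - 1) * (ω:ℂ) ^ ((l:ℂ) * Complex.I) := by
        rw [← Complex.cpow_add _ _ hωC]
        congr 1
        ring
      rw [hsplit]
      ring
    rw [e1, integral_const_mul, key_inversion f hdc hωpos]
    have e2 : (ω:ℂ) ^ ((c:ℂ) - 1) * (ω:ℂ) ^ (((d - c : ℝ)):ℂ) = ((ω ^ (d - 1) : ℝ):ℂ) := by
      rw [← Complex.cpow_add _ _ hωC, Complex.ofReal_cpow hωpos.le]
      congr 1
      push_cast
      ring
    calc (g ω * (ω:ℂ) ^ ((c:ℂ) - 1)) *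
          (((2 * Real.pi : ℝ):ℂ) * (ω:ℂ) ^ (((d - c : ℝ)):ℂ) * f ω)
        = ((2 * Real.pi : ℝ):ℂ) *
            (((ω:ℂ) ^ ((c:ℂ) - 1) * (ω:ℂ) ^ (((d - c : ℝ)):ℂ)) * f ω * g ω) := by ring
      _ = ((2 * Real.pi : ℝ):ℂ) * (((ω ^ (d - 1) : ℝ):ℂ) * f ω * g ω) := by rw [e2]
  have hR : (∫ l : ℝ, M (⇑f) ((d : ℂ) - c - (l : ℂ) * Complex.I) *
        M (⇑g) ((c : ℂ) + (l : ℂ) * Complex.I))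
      = ((2 * Real.pi : ℝ):ℂ) *
          ∫ ω in Ioi (0:ℝ), ((ω ^ (d - 1) : ℝ):ℂ) * f ω * g ω := by
    calc (∫ l : ℝ, M (⇑f) ((d : ℂ) - c - (l : ℂ) * Complex.I) *
          M (⇑g) ((c : ℂ) + (l : ℂ) * Complex.I))
        = ∫ l : ℝ, ∫ ω in Ioi (0:ℝ),
            mellin (⇑f) (((d - c : ℝ):ℂ) + ((-l : ℝ):ℂ) * Complex.I) *
              (g ω * (ω:ℂ) ^ ((c:ℂ) + (l:ℂ) * Complex.I - 1)) := by
          refine integral_congr_ae (Filter.Eventually.of_forall fun l => ?_)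
          show M (⇑f) ((d : ℂ) - c - (l : ℂ) * Complex.I) *
            M (⇑g) ((c : ℂ) + (l : ℂ) * Complex.I) = _
          rw [hM f, hsf l]
          have : M (⇑g) ((c : ℂ) + (l : ℂ) * Complex.I)
              = ∫ ω in Ioi (0:ℝ), g ω * (ω:ℂ) ^ ((c:ℂ) + (l:ℂ) * Complex.I - 1) := rfl
          rw [this, ← integral_const_mul]
      _ = ∫ ω in Ioi (0:ℝ), ∫ l : ℝ,
            mellin (⇑f) (((d - c : ℝ):ℂ) + ((-l : ℝ):ℂ) * Complex.I) *
              (g ω * (ω:ℂ) ^ ((c:ℂ) + (l:ℂ) * Complex.I - 1)) := by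
          exact integral_integral_swap hKint
      _ = ∫ ω in Ioi (0:ℝ), ((2 * Real.pi : ℝ):ℂ) * (((ω ^ (d - 1) : ℝ):ℂ) * f ω * g ω) :=
          setIntegral_congr_fun measurableSet_Ioi hω_inner
      _ = ((2 * Real.pi : ℝ):ℂ) * ∫ ω in Ioi (0:ℝ), ((ω ^ (d - 1) : ℝ):ℂ) * f ω * g ω :=
          integral_const_mul _ _
  rw [hR, ← mul_assoc, ← Complex.ofReal_mul, one_div, inv_mul_cancel₀ h2πne,
    Complex.ofReal_one, one_mul]
end
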